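/- arXiv:1503.04460 — 2 statements merged into one kernel-verified Lean document; each statement's English description precedes it below -/
import Mathlib

section
/- (Optimal value over co-monotone allocations.) Let Φ₁, …, Φₙ be distortion kernels with associated distortion risk measures ρ₁, …, ρₙ, each satisfying the continuity condition lim_{m→∞} ρᵢ(X ∧ m) = ρᵢ(X) for every nonnegative random variable X with ρᵢ(X) well defined. Let λ₁, …, λₙ > 0 and let X₀ be a random variable with X₀ ≥ 0 a.s. and F_{X₀}(0) = 0. Define Ψ(t) = min{λ₁(1 − Φ₁(t)), …, λₙ(1 − Φₙ(t))} for t ∈ [0, 1]. Then inf{Σᵢ λᵢ ρᵢ(fᵢ(X₀)) : (f₁, …, fₙ) ∈ 𝔸ℂ} = ∫₀^∞ Ψ(F_{X₀}(s)) ds (an equality in [0, +∞]). -/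
open MeasureTheory Filter
open scoped ENNReal Pointwise Classical

noncomputable section

variable {Ω : Type*} [MeasurableSpace Ω]


/-- `VaR_t(X) = inf {x ∈ ℝ | P(X > x) ≤ 1 − t}`. -/
def VaR (P : Measure Ω) (X : Ω → ℝ) (t : ℝ) : ℝ :=
  sInf {x : ℝ | P {ω | x < X ω} ≤ ENNReal.ofReal (1 - t)}

/-- A distortion kernel: a nondecreasing right-continuous `Φ : [0,1] → [0,1]` with
`Φ(0) = 0` and `Φ(1) = 1`, modelled as a Stieltjes function on `ℝ` extended by `0`
to the left of `0` and by `1` to the right of `1`. -/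
structure DistortionKernel where
  toStieltjes : StieltjesFunction ℝ
  zero_of_nonpos : ∀ x : ℝ, x ≤ 0 → toStieltjes x = 0
  one_of_one_le : ∀ x : ℝ, 1 ≤ x → toStieltjes x = 1

/-- The distortion risk measure `ρ_Φ(X) = ∫₀¹ VaR_t(X) dΦ(t)` (integral against the
Lebesgue–Stieltjes measure of `Φ`). -/
def distortionRisk (P : Measure Ω) (K : DistortionKernel) (X : Ω → ℝ) : ℝ :=
  ∫ t in Set.Ioc (0 : ℝ) 1, VaR P X t ∂K.toStieltjes.measure

/-- The cumulative distribution function `F_X(x) = P(X ≤ x)`. -/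
def cdf (P : Measure Ω) (X : Ω → ℝ) (x : ℝ) : ℝ :=
  (P {ω | X ω ≤ x}).toReal

/-- The distortion risk measure of a nonnegative risk, with values in `[0, +∞]`. -/
def distortionRiskE (P : Measure Ω) (K : DistortionKernel) (X : Ω → ℝ) : ℝ≥0∞ :=
  ∫⁻ t in Set.Ioc (0 : ℝ) 1, ENNReal.ofReal (VaR P X t) ∂K.toStieltjes.measure

/-- The set `𝔸ℂ` of admissible (co-monotone) allocations: tuples of nondecreasing
nonnegative functions on `ℝ₊` vanishing at `0` and summing to the identity. -/
def IsAdmissible (n : ℕ) (f : Fin n → ℝ → ℝ) : Prop :=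
  (∀ i, MonotoneOn (f i) (Set.Ici 0)) ∧ (∀ i x, 0 ≤ x → 0 ≤ f i x) ∧
    (∀ i, f i 0 = 0) ∧ ∀ x : ℝ, 0 ≤ x → ∑ i, f i x = x

/-- The regularity condition `lim_{m→∞} ρ_Φ(X ∧ m) = ρ_Φ(X)` for nonnegative risks. -/
def ContinuityCondition (P : Measure Ω) (K : DistortionKernel) : Prop :=
  ∀ X : Ω → ℝ, Measurable X → (∀ ω, 0 ≤ X ω) →
    Filter.Tendsto (fun m : ℕ => distortionRiskE P K (fun ω => min (X ω) (m : ℝ)))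
      Filter.atTop (nhds (distortionRiskE P K X))


namespace Stmt17Aux
open Set Topology

variable {P : Measure Ω} [IsProbabilityMeasure P] {X : Ω → ℝ}

lemma cdf_mono : Monotone (cdf P X) := fun a b hab =>
  ENNReal.toReal_mono (measure_ne_top _ _) (measure_mono fun ω (h : X ω ≤ a) => h.trans hab)

lemma cdf_nonneg (x : ℝ) : 0 ≤ cdf P X x := ENNReal.toReal_nonneg

lemma cdf_le_one (x : ℝ) : cdf P X x ≤ 1 := by
  have h := ENNReal.toReal_mono (ENNReal.one_ne_top) (prob_le_one (μ := P) (s := {ω | X ω ≤ x}))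
  simpa [cdf] using h

lemma measurable_cdf : Measurable (cdf P X) := cdf_mono.measurable

lemma stieltjes_le_one (K : DistortionKernel) {c : ℝ} (hc : c ≤ 1) : K.toStieltjes c ≤ 1 := by
  rw [← K.one_of_one_le 1 le_rfl]; exact K.toStieltjes.mono hc

lemma cdf_eq_zero_of_neg (hX0 : ∀ ω, 0 ≤ X ω) {x : ℝ} (hx : x < 0) : cdf P X x = 0 := by
  have : {ω | X ω ≤ x} = (∅ : Set Ω) := by
    ext ω; simp only [mem_setOf_eq, mem_empty_iff_false, iff_false, not_le]
    exact lt_of_lt_of_le hx (hX0 ω)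
  simp [cdf, this]

lemma le_cdf_of_forall_lt (hX : Measurable X) {t x : ℝ}
    (h : ∀ ε : ℝ, 0 < ε → t ≤ cdf P X (x + ε)) : t ≤ cdf P X x := by
  have hmeas : ∀ n : ℕ, MeasurableSet {ω | X ω ≤ x + 1 / (n + 1)} := fun n =>
    measurableSet_le hX measurable_const
  have hanti : Antitone fun n : ℕ => {ω | X ω ≤ x + 1 / (n + 1 : ℝ)} := by
    intro a b hab ω hω
    have h1 : (1 : ℝ) / (b + 1) ≤ 1 / (a + 1) := by
      apply one_div_le_one_div_of_le (by positivity)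
      exact_mod_cast Nat.add_le_add_right hab 1
    have hω' : X ω ≤ x + 1 / (b + 1 : ℝ) := hω
    show X ω ≤ x + 1 / (a + 1 : ℝ)
    linarith
  have hInter : ⋂ n : ℕ, {ω | X ω ≤ x + 1 / (n + 1 : ℝ)} = {ω | X ω ≤ x} := by
    ext ω
    simp only [mem_iInter, mem_setOf_eq]
    constructor
    · intro hω
      by_contra hc; push_neg at hc
      obtain ⟨n, hn⟩ := exists_nat_one_div_lt (show (0:ℝ) < X ω - x by linarith)
      exact absurd (hω n) (by push_neg; linarith)
    · intro hω n; have : (0:ℝ) < 1 / (n+1) := by positivity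
      linarith
  have htend := tendsto_measure_iInter_atTop (μ := P)
    (fun n => (hmeas n).nullMeasurableSet) hanti ⟨0, measure_ne_top _ _⟩
  rw [hInter] at htend
  have htend2 : Tendsto (fun n : ℕ => cdf P X (x + 1 / (n + 1))) atTop (𝓝 (cdf P X x)) :=
    (ENNReal.tendsto_toReal (measure_ne_top _ _)).comp htend
  exact ge_of_tendsto' htend2 fun n => h _ (by positivity)

lemma qset_subset_Ici (hX0 : ∀ ω, 0 ≤ X ω) {t : ℝ} (ht : 0 < t) :
    {x | t ≤ cdf P X x} ⊆ Ici 0 := by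
  intro x hx
  by_contra hneg
  rw [mem_Ici, not_le] at hneg
  rw [mem_setOf_eq, cdf_eq_zero_of_neg hX0 hneg] at hx
  linarith

lemma csInf_mem_qset (hX : Measurable X) (hX0 : ∀ ω, 0 ≤ X ω) {t : ℝ} (ht : 0 < t)
    (hne : {x | t ≤ cdf P X x}.Nonempty) : t ≤ cdf P X (sInf {x | t ≤ cdf P X x}) := by
  have hbdd : BddBelow {x | t ≤ cdf P X x} := ⟨0, fun x hx => qset_subset_Ici hX0 ht hx⟩
  apply le_cdf_of_forall_lt hX
  intro ε hε
  obtain ⟨y, hy, hlt⟩ := (csInf_lt_iff hbdd hne).1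
    (lt_add_of_pos_right (sInf {x | t ≤ cdf P X x}) hε)
  exact le_trans hy (cdf_mono hlt.le)

lemma set_cdf_lt_of_nonempty (hX : Measurable X) (hX0 : ∀ ω, 0 ≤ X ω) {t : ℝ} (ht : 0 < t)
    (hne : {x | t ≤ cdf P X x}.Nonempty) :
    {s | cdf P X s < t} ∩ Ioi 0 = Ioo 0 (sInf {x | t ≤ cdf P X x}) := by
  have hbdd : BddBelow {x | t ≤ cdf P X x} := ⟨0, fun x hx => qset_subset_Ici hX0 ht hx⟩
  ext s
  simp only [mem_inter_iff, mem_setOf_eq, mem_Ioi, mem_Ioo]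
  constructor
  · rintro ⟨hlt, hs⟩
    refine ⟨hs, ?_⟩
    by_contra hge; push_neg at hge
    exact absurd (le_trans (csInf_mem_qset hX hX0 ht hne) (cdf_mono hge)) (not_le.2 hlt)
  · rintro ⟨hs, hlt⟩
    refine ⟨?_, hs⟩
    by_contra hge; push_neg at hge
    exact absurd hlt (not_lt.2 (csInf_le hbdd hge))

lemma VaR_eq_sInf (hX : Measurable X) {t : ℝ} (ht : 0 < t) (ht1 : t ≤ 1) :
    VaR P X t = sInf {x | t ≤ cdf P X x} := by
  unfold VaR
  congr 1
  ext x
  have hmeas : MeasurableSet {ω | X ω ≤ x} := measurableSet_le hX measurable_const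
  have hcompl : {ω | x < X ω} = {ω | X ω ≤ x}ᶜ := by
    ext ω; simp [not_le]
  rw [mem_setOf_eq, hcompl, measure_compl hmeas (measure_ne_top _ _), measure_univ,
    show ENNReal.ofReal (1 - t) = 1 - ENNReal.ofReal t by
      rw [ENNReal.ofReal_sub _ ht.le, ENNReal.ofReal_one],
    ENNReal.sub_le_sub_iff_left (by simpa using ht1) ENNReal.one_ne_top,
    ENNReal.ofReal_le_iff_le_toReal (measure_ne_top _ _)]
  rfl

lemma ofReal_VaR_eq (hX : Measurable X) (hX0 : ∀ ω, 0 ≤ X ω) {c : ℝ} (hXc : ∀ ω, X ω ≤ c)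
    {t : ℝ} (ht : 0 < t) (ht1 : t ≤ 1) :
    ENNReal.ofReal (VaR P X t) = volume ({s | cdf P X s < t} ∩ Ioi 0) := by
  have hne : {x | t ≤ cdf P X x}.Nonempty := by
    refine ⟨c, ?_⟩
    have hu : {ω | X ω ≤ c} = univ := eq_univ_of_forall hXc
    simp only [mem_setOf_eq, cdf, hu, measure_univ, ENNReal.toReal_one]
    exact ht1
  rw [VaR_eq_sInf hX ht ht1, set_cdf_lt_of_nonempty hX hX0 ht hne, Real.volume_Ioo, sub_zero]


lemma lintegral_ite_mem (mu : Measure ℝ) {S T : Set ℝ} (hS : MeasurableSet S)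
    (hT : MeasurableSet T) :
    ∫⁻ x in T, (if x ∈ S then (1 : ℝ≥0∞) else 0) ∂mu = mu (S ∩ T) := by
  have h : ∀ x, (if x ∈ S then (1 : ℝ≥0∞) else 0) = S.indicator 1 x := fun x => by
    simp [Set.indicator_apply]
  simp_rw [h]
  rw [lintegral_indicator_one hS, Measure.restrict_apply hS]

lemma layercake (mu : Measure ℝ) [SigmaFinite mu] (K : DistortionKernel) {F : ℝ → ℝ}
    (hF : Measurable F) (hF0 : ∀ s, 0 ≤ F s) (hF1 : ∀ s, F s ≤ 1) :
    ∫⁻ s in Ioi (0 : ℝ), ENNReal.ofReal (1 - K.toStieltjes (F s)) ∂mu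
      = ∫⁻ t in Ioc (0 : ℝ) 1, mu ({s | F s < t} ∩ Ioi 0) ∂K.toStieltjes.measure := by
  have h1 : ∀ s, ENNReal.ofReal (1 - K.toStieltjes (F s))
      = ∫⁻ t in Ioc (0 : ℝ) 1, (if F s < t then (1 : ℝ≥0∞) else 0) ∂K.toStieltjes.measure := by
    intro s
    have hset : Ioi (F s) ∩ Ioc (0 : ℝ) 1 = Ioc (F s) 1 := by
      ext t
      simp only [mem_inter_iff, mem_Ioi, mem_Ioc]
      constructor
      · rintro ⟨h₁, _, h₃⟩; exact ⟨h₁, h₃⟩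
      · rintro ⟨h₁, h₂⟩; exact ⟨h₁, lt_of_le_of_lt (hF0 s) h₁, h₂⟩
    have := lintegral_ite_mem K.toStieltjes.measure (measurableSet_Ioi (a := F s))
      (measurableSet_Ioc (a := (0:ℝ)) (b := 1))
    simp only [mem_Ioi] at this
    rw [this, hset, StieltjesFunction.measure_Ioc, K.one_of_one_le 1 le_rfl]
  calc ∫⁻ s in Ioi (0 : ℝ), ENNReal.ofReal (1 - K.toStieltjes (F s)) ∂mu
      = ∫⁻ s in Ioi (0 : ℝ), ∫⁻ t in Ioc (0 : ℝ) 1,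
          (if F s < t then (1 : ℝ≥0∞) else 0) ∂K.toStieltjes.measure ∂mu := by
        exact lintegral_congr fun s => h1 s
    _ = ∫⁻ t in Ioc (0 : ℝ) 1, ∫⁻ s in Ioi (0 : ℝ),
          (if F s < t then (1 : ℝ≥0∞) else 0) ∂mu ∂K.toStieltjes.measure := by
        apply lintegral_lintegral_swap
        apply Measurable.aemeasurable
        exact Measurable.ite (measurableSet_lt (hF.comp measurable_fst) measurable_snd)
          measurable_const measurable_const
    _ = ∫⁻ t in Ioc (0 : ℝ) 1, mu ({s | F s < t} ∩ Ioi 0) ∂K.toStieltjes.measure := by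
        refine lintegral_congr fun t => ?_
        have := lintegral_ite_mem mu (S := {s | F s < t})
          (measurableSet_lt hF measurable_const) (measurableSet_Ioi (a := (0:ℝ)))
        simpa using this

lemma distortionRiskE_eq_of_bounded (K : DistortionKernel) (hX : Measurable X)
    (hX0 : ∀ ω, 0 ≤ X ω) {c : ℝ} (hXc : ∀ ω, X ω ≤ c) :
    distortionRiskE P K X
      = ∫⁻ s in Ioi (0 : ℝ), ENNReal.ofReal (1 - K.toStieltjes (cdf P X s)) := by
  rw [layercake volume K measurable_cdf cdf_nonneg cdf_le_one]
  exact setLIntegral_congr_fun measurableSet_Ioc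
    (fun t ht => ofReal_VaR_eq hX hX0 hXc ht.1 ht.2)

lemma cdf_min_lt {m s : ℝ} (hsm : s < m) :
    cdf P (fun ω => min (X ω) m) s = cdf P X s := by
  have hset : {ω | min (X ω) m ≤ s} = {ω | X ω ≤ s} := by
    ext ω
    simp only [mem_setOf_eq, min_le_iff]
    constructor
    · rintro (h | h)
      · exact h
      · linarith
    · exact fun h => Or.inl h
  show (P {ω | min (X ω) m ≤ s}).toReal = (P {ω | X ω ≤ s}).toReal
  rw [hset]

lemma cdf_min_ge {m s : ℝ} (hsm : m ≤ s) :
    cdf P (fun ω => min (X ω) m) s = 1 := by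
  have hu : {ω | min (X ω) m ≤ s} = univ :=
    eq_univ_of_forall fun ω => le_trans (min_le_right _ _) hsm
  show (P {ω | min (X ω) m ≤ s}).toReal = 1
  rw [hu, measure_univ, ENNReal.toReal_one]

lemma distortionRiskE_eq (K : DistortionKernel) (hK : ContinuityCondition P K)
    (hX : Measurable X) (hX0 : ∀ ω, 0 ≤ X ω) :
    distortionRiskE P K X
      = ∫⁻ s in Ioi (0 : ℝ), ENNReal.ofReal (1 - K.toStieltjes (cdf P X s)) := by
  set g : ℝ → ℝ≥0∞ := fun s => ENNReal.ofReal (1 - K.toStieltjes (cdf P X s)) with hgdef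
  have hgm : Measurable g :=
    ENNReal.measurable_ofReal.comp
      ((K.toStieltjes.mono.comp cdf_mono).measurable.const_sub 1)
  have h1 : ∀ m : ℕ, distortionRiskE P K (fun ω => min (X ω) (m : ℝ))
      = ∫⁻ s, (Ioo (0 : ℝ) (m : ℝ)).indicator g s := by
    intro m
    rw [distortionRiskE_eq_of_bounded K (hX.min measurable_const)
      (fun ω => le_min (hX0 ω) (Nat.cast_nonneg m)) (fun ω => min_le_right _ _),
      ← lintegral_indicator measurableSet_Ioi]
    refine lintegral_congr fun s => ?_
    by_cases hs : 0 < s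
    · by_cases hsm : s < (m : ℝ)
      · rw [indicator_of_mem (mem_Ioi.2 hs), indicator_of_mem (show s ∈ Ioo (0:ℝ) (m:ℝ) from ⟨hs, hsm⟩), hgdef]
        simp only
        rw [cdf_min_lt hsm]
      · rw [indicator_of_mem (mem_Ioi.2 hs), indicator_of_notMem (fun hmem => hsm hmem.2),
          cdf_min_ge (not_lt.1 hsm), K.one_of_one_le 1 le_rfl]
        simp
    · rw [indicator_of_notMem (by simpa using hs), indicator_of_notMem (fun hmem => hs hmem.1)]
  have h2 : Monotone fun m : ℕ => (Ioo (0 : ℝ) (m : ℝ)).indicator g := by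
    intro a b hab
    apply indicator_le_indicator_of_subset
    · exact Ioo_subset_Ioo_right (by exact_mod_cast hab)
    · exact fun s => zero_le
  have h3 : (⨆ m : ℕ, ∫⁻ s, (Ioo (0 : ℝ) (m : ℝ)).indicator g s)
      = ∫⁻ s, (Ioi (0 : ℝ)).indicator g s := by
    rw [← lintegral_iSup (fun m => hgm.indicator measurableSet_Ioo) h2]
    refine lintegral_congr fun s => ?_
    rcases le_or_gt s 0 with hs | hs
    · have : ∀ m : ℕ, (Ioo (0 : ℝ) (m : ℝ)).indicator g s = 0 := fun m =>
        indicator_of_notMem (fun hmem => absurd hmem.1 (not_lt.2 hs)) g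
      have hnot : s ∉ Ioi (0 : ℝ) := by simpa using hs
      simp [this, indicator_of_notMem hnot]
    · obtain ⟨m, hm⟩ := exists_nat_gt s
      rw [indicator_of_mem (mem_Ioi.2 hs)]
      apply le_antisymm
      · exact iSup_le fun k => indicator_le_self' (fun _ _ => zero_le) s
      · exact le_iSup_of_le m (le_of_eq (indicator_of_mem (show s ∈ Ioo (0:ℝ) (m:ℝ) from ⟨hs, hm⟩) g).symm)
  have h4 := hK X hX hX0
  have h4' : Tendsto (fun m : ℕ => ∫⁻ s, (Ioo (0 : ℝ) (m : ℝ)).indicator g s) atTop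
      (𝓝 (distortionRiskE P K X)) := h4.congr fun m => h1 m
  have h5 : Tendsto (fun m : ℕ => ∫⁻ s, (Ioo (0 : ℝ) (m : ℝ)).indicator g s) atTop
      (𝓝 (∫⁻ s, (Ioi (0 : ℝ)).indicator g s)) := by
    rw [← h3]
    exact tendsto_atTop_iSup fun a b hab => lintegral_mono (h2 hab)
  rw [tendsto_nhds_unique h4' h5, lintegral_indicator measurableSet_Ioi]


lemma cdf_comp_ge (G : StieltjesFunction ℝ) {a : ℝ} :
    cdf P X a ≤ cdf P (fun ω => G (X ω)) (G a) :=
  ENNReal.toReal_mono (measure_ne_top _ _)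
    (measure_mono fun ω (h : X ω ≤ a) => G.mono h)

lemma cdf_comp_le (G : StieltjesFunction ℝ) {s u : ℝ} (h : s < G u) :
    cdf P (fun ω => G (X ω)) s ≤ cdf P X u := by
  apply ENNReal.toReal_mono (measure_ne_top _ _)
  apply measure_mono
  intro ω (hω : G (X ω) ≤ s)
  show X ω ≤ u
  by_contra hc
  push_neg at hc
  exact absurd (le_trans (G.mono hc.le) hω) (not_le.2 h)

lemma iUnion_Ioc_nat : (⋃ m : ℕ, Ioc (0 : ℝ) (m : ℝ)) = Ioi 0 := by
  ext s
  simp only [mem_iUnion, mem_Ioc, mem_Ioi]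
  constructor
  · rintro ⟨m, h, _⟩; exact h
  · intro hs
    obtain ⟨m, hm⟩ := exists_nat_ge s
    exact ⟨m, hs, hm⟩

lemma core_subst (hX : Measurable X) (hX0 : ∀ ω, 0 ≤ X ω)
    (G : StieltjesFunction ℝ) (hGc : Continuous ⇑G) (hG0 : ∀ x : ℝ, x ≤ 0 → G x = 0)
    {t : ℝ} (ht : 0 < t) (ht1 : t ≤ 1) :
    volume ({s | cdf P (fun ω => G (X ω)) s < t} ∩ Ioi 0)
      = G.measure ({u | cdf P X u < t} ∩ Ioi 0) := by
  have hGX : Measurable fun ω => G (X ω) := G.mono.measurable.comp hX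
  have hGnn : ∀ x, 0 ≤ G x := fun x => by
    rcases le_or_gt x 0 with hx | hx
    · exact (hG0 x hx).ge
    · rw [← hG0 0 le_rfl]; exact G.mono hx.le
  have hGX0 : ∀ ω, 0 ≤ G (X ω) := fun ω => hGnn _
  have hleftLim : ∀ b : ℝ, Function.leftLim (⇑G) b = G b := fun b =>
    leftLim_eq_of_tendsto
      (hGc.continuousAt.tendsto.mono_left nhdsWithin_le_nhds)
  by_cases hA : {x | t ≤ cdf P X x}.Nonempty
  · set a := sInf {x | t ≤ cdf P X x} with hadef
    have hbdd : BddBelow {x | t ≤ cdf P X x} := ⟨0, fun x hx => qset_subset_Ici hX0 ht hx⟩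
    have ha0 : 0 ≤ a := le_csInf hA (fun x hx => qset_subset_Ici hX0 ht hx)
    have haA : t ≤ cdf P X a := csInf_mem_qset hX hX0 ht hA
    have hGaA : t ≤ cdf P (fun ω => G (X ω)) (G a) := le_trans haA (cdf_comp_ge G)
    have hA' : {x | t ≤ cdf P (fun ω => G (X ω)) x}.Nonempty := ⟨G a, hGaA⟩
    have hbdd' : BddBelow {x | t ≤ cdf P (fun ω => G (X ω)) x} :=
      ⟨0, fun x hx => qset_subset_Ici hGX0 ht hx⟩
    have key : sInf {x | t ≤ cdf P (fun ω => G (X ω)) x} = G a := by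
      apply le_antisymm (csInf_le hbdd' hGaA)
      apply le_csInf hA'
      intro s hs
      by_contra hc
      push_neg at hc
      have hs0 : (0 : ℝ) ≤ s := qset_subset_Ici hGX0 ht hs
      have hmid : (s + G a) / 2 ∈ Icc (G 0) (G a) := by
        constructor
        · rw [hG0 0 le_rfl]; linarith
        · linarith
      obtain ⟨u, hu, hgu⟩ := intermediate_value_Icc ha0 hGc.continuousOn hmid
      have hua : u < a := by
        rcases lt_or_eq_of_le hu.2 with h | h
        · exact h
        · exfalso; rw [h] at hgu; linarith
      have h1 : cdf P (fun ω => G (X ω)) s ≤ cdf P X u :=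
        cdf_comp_le G (by rw [hgu]; linarith)
      have h2 : cdf P X u < t := by
        by_contra hcc
        push_neg at hcc
        exact absurd (csInf_le hbdd hcc) (not_le.2 hua)
      exact absurd hs (not_le.2 (lt_of_le_of_lt h1 h2))
    rw [set_cdf_lt_of_nonempty hGX hGX0 ht hA', set_cdf_lt_of_nonempty hX hX0 ht hA, key,
      Real.volume_Ioo, StieltjesFunction.measure_Ioo, hleftLim, hG0 0 le_rfl, sub_zero]
  · have hAlt : ∀ x, cdf P X x < t := fun x =>
      lt_of_not_ge fun h => hA ⟨x, h⟩
    have hRset : {u | cdf P X u < t} ∩ Ioi 0 = Ioi 0 := by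
      ext u; simp [hAlt u]
    have hRHS : G.measure ({u | cdf P X u < t} ∩ Ioi 0)
        = ⨆ m : ℕ, ENNReal.ofReal (G m) := by
      have hdir : Directed (· ⊆ ·) fun m : ℕ => Ioc (0:ℝ) (m:ℝ) := by
        have hmon : Monotone fun m : ℕ => Ioc (0:ℝ) (m:ℝ) := fun a b hab =>
          Ioc_subset_Ioc_right (by exact_mod_cast hab)
        exact hmon.directed_le
      rw [hRset, ← iUnion_Ioc_nat, Directed.measure_iUnion hdir]
      refine iSup_congr fun m => ?_
      rw [StieltjesFunction.measure_Ioc, hG0 0 le_rfl, sub_zero]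
    by_cases hB : BddAbove (Set.range ⇑G)
    · set l := ⨆ x : ℝ, G x with hldef
      have hGle : ∀ x, G x ≤ l := fun x => le_ciSup hB x
      have htop : Tendsto (⇑G) atTop (𝓝 l) := tendsto_atTop_ciSup G.mono hB
      have hlA' : t ≤ cdf P (fun ω => G (X ω)) l := by
        have hu : {ω | G (X ω) ≤ l} = univ := eq_univ_of_forall fun ω => hGle _
        show t ≤ (P {ω | G (X ω) ≤ l}).toReal
        rw [hu, measure_univ, ENNReal.toReal_one]
        exact ht1
      have hA' : {x | t ≤ cdf P (fun ω => G (X ω)) x}.Nonempty := ⟨l, hlA'⟩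
      have hbdd' : BddBelow {x | t ≤ cdf P (fun ω => G (X ω)) x} :=
        ⟨0, fun x hx => qset_subset_Ici hGX0 ht hx⟩
      have hub : ∀ s ∈ {x | t ≤ cdf P (fun ω => G (X ω)) x}, ∀ u : ℝ, G u ≤ s := by
        intro s hs u
        by_contra hc
        push_neg at hc
        exact absurd hs
          (not_le.2 (lt_of_le_of_lt (cdf_comp_le G hc) (hAlt u)))
      have key : sInf {x | t ≤ cdf P (fun ω => G (X ω)) x} = l := by
        apply le_antisymm (csInf_le hbdd' hlA')
        apply le_csInf hA'
        intro s hs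
        exact ciSup_le fun u => hub s hs u
      rw [set_cdf_lt_of_nonempty hGX hGX0 ht hA', key, Real.volume_Ioo, sub_zero, hRHS]
      have hmono : Monotone fun m : ℕ => ENNReal.ofReal (G m) := fun a b hab =>
        ENNReal.ofReal_le_ofReal (G.mono (by exact_mod_cast hab))
      have htend : Tendsto (fun m : ℕ => ENNReal.ofReal (G m)) atTop
          (𝓝 (ENNReal.ofReal l)) :=
        (ENNReal.continuous_ofReal.tendsto l).comp (htop.comp tendsto_natCast_atTop_atTop)
      exact (iSup_eq_of_tendsto hmono htend).symm
    · have hA'e : ∀ s, cdf P (fun ω => G (X ω)) s < t := by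
        intro s
        have : ∃ y : ℝ, s < G y := by
          by_contra hc
          push_neg at hc
          exact hB ⟨s, fun z hz => by obtain ⟨y, rfl⟩ := hz; exact hc y⟩
        obtain ⟨y, hy⟩ := this
        exact lt_of_le_of_lt (cdf_comp_le G hy) (hAlt y)
      have hLset : {s | cdf P (fun ω => G (X ω)) s < t} ∩ Ioi 0 = Ioi 0 := by
        ext s; simp [hA'e s]
      rw [hLset, Real.volume_Ioi, hRHS]
      symm
      rw [iSup_eq_top]
      intro b hb
      have : ∃ y : ℝ, b.toReal < G y := by
        by_contra hc
        push_neg at hc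
        exact hB ⟨b.toReal, fun z hz => by obtain ⟨y, rfl⟩ := hz; exact hc y⟩
      obtain ⟨y, hy⟩ := this
      obtain ⟨m, hm⟩ := exists_nat_ge y
      refine ⟨m, ?_⟩
      calc b = ENNReal.ofReal b.toReal := (ENNReal.ofReal_toReal hb.ne).symm
        _ < ENNReal.ofReal (G m) := by
            apply ENNReal.ofReal_lt_ofReal_iff_of_nonneg ENNReal.toReal_nonneg |>.2
            exact lt_of_lt_of_le hy (G.mono hm)

lemma distortionRiskE_comp (K : DistortionKernel) (hK : ContinuityCondition P K)
    (hX : Measurable X) (hX0 : ∀ ω, 0 ≤ X ω)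
    (G : StieltjesFunction ℝ) (hGc : Continuous ⇑G) (hG0 : ∀ x : ℝ, x ≤ 0 → G x = 0) :
    distortionRiskE P K (fun ω => G (X ω))
      = ∫⁻ u in Ioi (0 : ℝ), ENNReal.ofReal (1 - K.toStieltjes (cdf P X u)) ∂G.measure := by
  have hGX : Measurable fun ω => G (X ω) := G.mono.measurable.comp hX
  have hGnn : ∀ x, 0 ≤ G x := fun x => by
    rcases le_or_gt x 0 with hx | hx
    · exact (hG0 x hx).ge
    · rw [← hG0 0 le_rfl]; exact G.mono hx.le
  rw [distortionRiskE_eq K hK hGX (fun ω => hGnn _),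
    layercake volume K measurable_cdf cdf_nonneg cdf_le_one,
    layercake G.measure K measurable_cdf cdf_nonneg cdf_le_one]
  exact setLIntegral_congr_fun measurableSet_Ioc
    (fun t ht => core_subst hX hX0 G hGc hG0 ht.1 ht.2)

lemma distortionRiskE_congr_ae (K : DistortionKernel) {Y Z : Ω → ℝ}
    (h : ∀ᵐ ω ∂P, Y ω = Z ω) :
    distortionRiskE P K Y = distortionRiskE P K Z := by
  have hVaR : ∀ t, VaR P Y t = VaR P Z t := by
    intro t
    unfold VaR
    congr 1
    ext x
    have : P {ω | x < Y ω} = P {ω | x < Z ω} := by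
      apply measure_congr
      rw [eventuallyEq_set]
      filter_upwards [h] with ω hω
      show x < Y ω ↔ x < Z ω
      rw [hω]
    simp [mem_setOf_eq, this]
  unfold distortionRiskE
  exact lintegral_congr fun t => by rw [hVaR t]


lemma Ioc_inter_Ioi_zero (a b : ℝ) : Ioc a b ∩ Ioi 0 = Ioc (max a 0) b := by
  ext s
  simp only [mem_inter_iff, mem_Ioc, mem_Ioi, max_lt_iff]
  tauto

lemma value_eq {n : ℕ} (K : Fin n → DistortionKernel)
    (hcont : ∀ i, ContinuityCondition P (K i))
    {X₀ : Ω → ℝ} (hmeas : Measurable X₀) (hpos : ∀ᵐ ω ∂P, 0 ≤ X₀ ω)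
    {f : Fin n → ℝ → ℝ} (hf : IsAdmissible n f) :
    ∃ G : Fin n → StieltjesFunction ℝ,
      (∀ i x, G i x = f i (max x 0)) ∧
      ((∑ i, (G i).measure.restrict (Ioi 0)) = volume.restrict (Ioi (0 : ℝ))) ∧
      (∀ i, distortionRiskE P (K i) (fun ω => f i (X₀ ω))
        = ∫⁻ u in Ioi (0 : ℝ),
            ENNReal.ofReal (1 - (K i).toStieltjes (cdf P X₀ u)) ∂(G i).measure) := by
  obtain ⟨hmono, hnn, hzero, hsum⟩ := hf
  set X : Ω → ℝ := fun ω => max (X₀ ω) 0 with hXdef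
  have hX : Measurable X := hmeas.max measurable_const
  have hX0 : ∀ ω, 0 ≤ X ω := fun ω => le_max_right _ _
  set g : Fin n → ℝ → ℝ := fun i x => f i (max x 0) with hgdef
  have hgmono : ∀ i, Monotone (g i) := fun i a b hab =>
    hmono i (mem_Ici.2 (le_max_right a 0)) (mem_Ici.2 (le_max_right b 0))
      (max_le_max hab le_rfl)
  have hgsum : ∀ x : ℝ, ∑ i, g i x = max x 0 := fun x => hsum (max x 0) (le_max_right x 0)
  have hkey : ∀ i (x y : ℝ), x ≤ y → g i y - g i x ≤ y - x := by
    intro i x y hxy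
    have h1 : ∀ j, g j x ≤ g j y := fun j => hgmono j hxy
    have h2 : g i y - g i x ≤ ∑ j, (g j y - g j x) := by
      apply Finset.single_le_sum (f := fun j => g j y - g j x)
        (fun j _ => sub_nonneg.2 (h1 j)) (Finset.mem_univ i)
    have h3 : ∑ j, (g j y - g j x) = max y 0 - max x 0 := by
      rw [Finset.sum_sub_distrib, hgsum, hgsum]
    have h4 : max y 0 - max x 0 ≤ y - x := by
      rcases le_or_gt 0 x with hx | hx
      · rw [max_eq_left hx, max_eq_left (hx.trans hxy)]
      · rw [max_eq_right hx.le]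
        rcases le_or_gt 0 y with hy | hy
        · rw [max_eq_left hy]; linarith
        · rw [max_eq_right hy.le]; linarith
    linarith
  have hlip : ∀ i, LipschitzWith 1 (g i) := by
    intro i
    apply LipschitzWith.of_dist_le_mul
    have habs : ∀ x y : ℝ, x ≤ y → dist (g i x) (g i y) ≤ 1 * dist x y := by
      intro x y h
      rw [one_mul, Real.dist_eq, Real.dist_eq, abs_sub_comm,
        abs_of_nonneg (sub_nonneg.2 (hgmono i h)), abs_sub_comm,
        abs_of_nonneg (sub_nonneg.2 h)]
      exact hkey i x y h
    intro x y
    rcases le_total x y with h | h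
    · exact habs x y h
    · rw [dist_comm, dist_comm x y]; exact habs y x h
  have hg0 : ∀ i (x : ℝ), x ≤ 0 → g i x = 0 := by
    intro i x hx
    rw [hgdef]
    simp only
    rw [max_eq_right hx]
    exact hzero i
  set G : Fin n → StieltjesFunction ℝ := fun i =>
    { toFun := g i
      mono' := hgmono i
      right_continuous' := fun x => ((hlip i).continuous.continuousAt).continuousWithinAt }
    with hGdef
  refine ⟨G, fun i x => rfl, ?_, ?_⟩
  · apply Measure.ext_of_Ioc'
    · intro a b _
      rw [Measure.finset_sum_apply]
      apply ne_of_lt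
      apply ENNReal.sum_lt_top.2
      intro i _
      rw [Measure.restrict_apply measurableSet_Ioc, Ioc_inter_Ioi_zero,
        StieltjesFunction.measure_Ioc]
      exact ENNReal.ofReal_lt_top
    · intro a b _
      rw [Measure.finset_sum_apply]
      have hterm : ∀ i, ((G i).measure.restrict (Ioi 0)) (Ioc a b)
          = ENNReal.ofReal (g i b - g i (max a 0)) := by
        intro i
        rw [Measure.restrict_apply measurableSet_Ioc, Ioc_inter_Ioi_zero,
          StieltjesFunction.measure_Ioc]
      have hrhs : (volume.restrict (Ioi (0:ℝ))) (Ioc a b)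
          = ENNReal.ofReal (b - max a 0) := by
        rw [Measure.restrict_apply measurableSet_Ioc, Ioc_inter_Ioi_zero, Real.volume_Ioc]
      simp_rw [hterm, hrhs]
      rcases le_or_gt b (max a 0) with hb | hb
      · have hz : ∀ i, ENNReal.ofReal (g i b - g i (max a 0)) = 0 := fun i =>
          ENNReal.ofReal_eq_zero.2 (sub_nonpos.2 (hgmono i hb))
        simp_rw [hz]
        rw [Finset.sum_const, smul_zero]
        symm
        exact ENNReal.ofReal_eq_zero.2 (sub_nonpos.2 hb)
      · rw [← ENNReal.ofReal_sum_of_nonneg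
          (fun i _ => sub_nonneg.2 (hgmono i hb.le))]
        congr 1
        rw [Finset.sum_sub_distrib, hgsum, hgsum]
        have h0a : (0:ℝ) ≤ max a 0 := le_max_right a 0
        rw [max_eq_left (h0a.trans hb.le), max_eq_left h0a]
  · intro i
    have hae : ∀ᵐ ω ∂P, f i (X₀ ω) = g i (X ω) := by
      filter_upwards [hpos] with ω hω
      rw [hgdef]
      simp only
      rw [hXdef]
      simp only
      rw [max_eq_left (le_max_right (X₀ ω) 0), max_eq_left hω]
    rw [distortionRiskE_congr_ae (K i) hae]
    have hcomp := distortionRiskE_comp (K i) (hcont i) hX hX0 (G i)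
      (hlip i).continuous (hg0 i)
    rw [show (fun ω => g i (X ω)) = (fun ω => (G i) (X ω)) from rfl, hcomp]
    refine setLIntegral_congr_fun measurableSet_Ioi (fun u hu => ?_)
    have hcdf : cdf P X u = cdf P X₀ u := by
      show (P {ω | max (X₀ ω) 0 ≤ u}).toReal = (P {ω | X₀ ω ≤ u}).toReal
      have : {ω | max (X₀ ω) 0 ≤ u} = {ω | X₀ ω ≤ u} := by
        ext ω
        simp only [mem_setOf_eq, max_le_iff]
        exact ⟨fun h => h.1, fun h => ⟨h, le_of_lt hu⟩⟩
      rw [this]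
    rw [hcdf]

end Stmt17Aux

theorem stmt17 (P : Measure Ω) [IsProbabilityMeasure P]
    (n : ℕ) (hn : 0 < n) (K : Fin n → DistortionKernel)
    (hcont : ∀ i, ContinuityCondition P (K i))
    (X₀ : Ω → ℝ) (hmeas : Measurable X₀) (hpos : ∀ᵐ ω ∂P, 0 ≤ X₀ ω)
    (hF0 : cdf P X₀ 0 = 0)
    (lam : Fin n → ℝ) (hlam : ∀ i, 0 < lam i) :
    ⨅ (f : Fin n → ℝ → ℝ) (_ : IsAdmissible n f),
        ∑ i, ENNReal.ofReal (lam i) * distortionRiskE P (K i) (fun ω => f i (X₀ ω)) =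
      ∫⁻ s in Set.Ioi (0 : ℝ),
        ENNReal.ofReal (⨅ i, lam i * (1 - (K i).toStieltjes (cdf P X₀ s))) := by
  classical
  open Set Stmt17Aux in
  haveI hFin : Nonempty (Fin n) := Fin.pos_iff_nonempty.1 hn
  set w : ℝ → Fin n → ℝ :=
    fun u j => lam j * (1 - (K j).toStieltjes (cdf P X₀ u)) with hwdef
  have hgoalw : ∀ s : ℝ,
      ENNReal.ofReal (⨅ i, lam i * (1 - (K i).toStieltjes (cdf P X₀ s)))
        = ENNReal.ofReal (⨅ j, w s j) := fun s => rfl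
  simp only [hgoalw]
  have hbddw : ∀ u, BddBelow (Set.range (w u)) := fun u => Finite.bddBelow_range _
  have hwmeas : ∀ j, Measurable fun u => w u j := fun j =>
    measurable_const.mul
      ((((K j).toStieltjes.mono.comp (cdf_mono (P := P) (X := X₀))).measurable).const_sub 1)
  have hmeasint : ∀ i,
      Measurable fun u => ENNReal.ofReal (1 - (K i).toStieltjes (cdf P X₀ u)) := fun i =>
    ENNReal.measurable_ofReal.comp
      (((K i).toStieltjes.mono.comp (cdf_mono (P := P) (X := X₀))).measurable.const_sub 1)
  apply le_antisymm
  · -- upper bound: explicit minimizer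
    set A : Fin n → Set ℝ := fun i =>
      {u | (∀ k, w u i ≤ w u k) ∧ ∀ j, j < i → ¬ ∀ k, w u j ≤ w u k} with hAdef
    have hAmeas : ∀ i, MeasurableSet (A i) := by
      intro i
      have hrepr : A i = (⋂ k, {u | w u i ≤ w u k}) ∩
          (⋂ j ∈ {j : Fin n | j < i}, (⋂ k, {u | w u j ≤ w u k})ᶜ) := by
        ext u
        simp only [hAdef, mem_setOf_eq, mem_inter_iff, mem_iInter, mem_compl_iff]
      rw [hrepr]
      exact ((MeasurableSet.iInter fun k => measurableSet_le (hwmeas i) (hwmeas k)).inter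
        (MeasurableSet.biInter (Set.to_countable _) fun j _ =>
          (MeasurableSet.iInter fun k => measurableSet_le (hwmeas j) (hwmeas k)).compl))
    have hAcover : ∀ u : ℝ, ∃ i, u ∈ A i := by
      intro u
      have hne : (Finset.univ.filter fun j : Fin n => ∀ k, w u j ≤ w u k).Nonempty := by
        obtain ⟨j, _, hj⟩ := Finset.exists_min_image Finset.univ (w u) Finset.univ_nonempty
        exact ⟨j, Finset.mem_filter.2 ⟨Finset.mem_univ _, fun k => hj k (Finset.mem_univ k)⟩⟩
      set i := (Finset.univ.filter fun j : Fin n => ∀ k, w u j ≤ w u k).min' hne with hidef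
      have hi := Finset.mem_filter.1
        ((Finset.univ.filter fun j : Fin n => ∀ k, w u j ≤ w u k).min'_mem hne)
      refine ⟨i, hi.2, fun j hj hall => ?_⟩
      have hle : i ≤ j := Finset.min'_le _ j (Finset.mem_filter.2 ⟨Finset.mem_univ _, hall⟩)
      exact absurd hj (not_lt.2 hle)
    have hAdisj : Pairwise (Function.onFun Disjoint A) := by
      intro i j hij
      rw [Function.onFun, Set.disjoint_left]
      intro u hui huj
      rcases lt_trichotomy i j with h | h | h
      · exact huj.2 i h hui.1
      · exact hij h
      · exact hui.2 j h huj.1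
    have hAunion : (⋃ i, A i) = Set.univ :=
      Set.eq_univ_of_forall fun u => Set.mem_iUnion.2 (hAcover u)
    set fstar : Fin n → ℝ → ℝ :=
      fun i x => (volume (A i ∩ Set.Ioc 0 x)).toReal with hfdef
    have hfin : ∀ i (a b : ℝ), volume (A i ∩ Set.Ioc a b) ≠ ⊤ := fun i a b =>
      ne_of_lt (lt_of_le_of_lt (measure_mono Set.inter_subset_right)
        (by rw [Real.volume_Ioc]; exact ENNReal.ofReal_lt_top))
    have hfmono : ∀ i, Monotone (fstar i) := fun i a b hab =>
      ENNReal.toReal_mono (hfin i 0 b)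
        (measure_mono (Set.inter_subset_inter_right _ (Set.Ioc_subset_Ioc_right hab)))
    have hfstar_adm : IsAdmissible n fstar := by
      refine ⟨fun i => (hfmono i).monotoneOn _, fun i x _ => ENNReal.toReal_nonneg,
        fun i => ?_, fun x hx => ?_⟩
      · show (volume (A i ∩ Set.Ioc 0 0)).toReal = 0
        rw [Set.Ioc_self, Set.inter_empty, measure_empty, ENNReal.toReal_zero]
      · show (∑ i, (volume (A i ∩ Set.Ioc 0 x)).toReal) = x
        rw [← ENNReal.toReal_sum (fun i _ => hfin i 0 x)]
        have hdisj : Pairwise (Function.onFun Disjoint fun i => A i ∩ Set.Ioc 0 x) := fun i j hij =>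
          (hAdisj hij).mono Set.inter_subset_left Set.inter_subset_left
        have hU : (⋃ i, A i ∩ Set.Ioc 0 x) = Set.Ioc 0 x := by
          rw [← Set.iUnion_inter, hAunion, Set.univ_inter]
        have hsum : ∑ i, volume (A i ∩ Set.Ioc 0 x) = volume (Set.Ioc 0 x) := by
          rw [← tsum_fintype (L := .unconditional _), ← measure_iUnion hdisj
            (fun i => (hAmeas i).inter measurableSet_Ioc), hU]
        rw [hsum, Real.volume_Ioc, sub_zero, ENNReal.toReal_ofReal hx]
    obtain ⟨G, hGspec, hGsum, hGval⟩ := value_eq K hcont hmeas hpos hfstar_adm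
    have hfstar_max : ∀ i (x : ℝ), fstar i (max x 0) = fstar i x := by
      intro i x
      rcases le_or_gt 0 x with hx | hx
      · rw [max_eq_left hx]
      · show (volume (A i ∩ Set.Ioc 0 (max x 0))).toReal
            = (volume (A i ∩ Set.Ioc 0 x)).toReal
        rw [max_eq_right hx.le, Set.Ioc_self, Set.Ioc_eq_empty (not_lt.2 hx.le)]
    have hGrestrict : ∀ i, (G i).measure.restrict (Set.Ioi 0)
        = volume.restrict (A i ∩ Set.Ioi 0) := by
      intro i
      apply Measure.ext_of_Ioc'
      · intro a b _
        rw [Measure.restrict_apply measurableSet_Ioc, Ioc_inter_Ioi_zero,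
          StieltjesFunction.measure_Ioc]
        exact ENNReal.ofReal_ne_top
      · intro a b _
        rw [Measure.restrict_apply measurableSet_Ioc, Ioc_inter_Ioi_zero,
          StieltjesFunction.measure_Ioc, Measure.restrict_apply measurableSet_Ioc]
        have h1 : (G i) b = fstar i b := by rw [hGspec i b, hfstar_max]
        have h2 : (G i) (max a 0) = fstar i (max a 0) := by rw [hGspec i (max a 0), hfstar_max]
        have hset : Set.Ioc a b ∩ (A i ∩ Set.Ioi 0) = A i ∩ Set.Ioc (max a 0) b := by
          rw [← Ioc_inter_Ioi_zero]
          ext u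
          simp only [Set.mem_inter_iff]
          tauto
        rw [h1, h2, hset]
        set a' := max a 0 with ha'def
        have ha'0 : (0:ℝ) ≤ a' := le_max_right a 0
        rcases le_or_gt b a' with hb | hb
        · rw [Set.Ioc_eq_empty (not_lt.2 hb), Set.inter_empty, measure_empty]
          exact ENNReal.ofReal_eq_zero.2 (sub_nonpos.2 (hfmono i hb))
        · have hsplit : A i ∩ Set.Ioc 0 b
              = (A i ∩ Set.Ioc 0 a') ∪ (A i ∩ Set.Ioc a' b) := by
            rw [← Set.inter_union_distrib_left, Set.Ioc_union_Ioc_eq_Ioc ha'0 hb.le]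
          have hdisj2 : Disjoint (A i ∩ Set.Ioc 0 a') (A i ∩ Set.Ioc a' b) :=
            (Set.Ioc_disjoint_Ioc_of_le le_rfl).mono Set.inter_subset_right Set.inter_subset_right
          have hv : volume (A i ∩ Set.Ioc 0 b)
              = volume (A i ∩ Set.Ioc 0 a') + volume (A i ∩ Set.Ioc a' b) := by
            rw [hsplit, measure_union hdisj2 ((hAmeas i).inter measurableSet_Ioc)]
          have e1 : fstar i b = (volume (A i ∩ Set.Ioc 0 a')).toReal
              + (volume (A i ∩ Set.Ioc a' b)).toReal := by
            show (volume (A i ∩ Set.Ioc 0 b)).toReal = _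
            rw [hv, ENNReal.toReal_add (hfin i 0 a') (hfin i a' b)]
          have e2 : fstar i a' = (volume (A i ∩ Set.Ioc 0 a')).toReal := rfl
          rw [e1, e2, add_sub_cancel_left, ENNReal.ofReal_toReal (hfin i a' b)]
    have hwmin : ∀ (u : ℝ) (i : Fin n), u ∈ A i → w u i = ⨅ j, w u j := fun u i hu =>
      le_antisymm (le_ciInf hu.1) (ciInf_le (hbddw u) i)
    have hstep1 : ∀ i, ENNReal.ofReal (lam i)
          * distortionRiskE P (K i) (fun ω => fstar i (X₀ ω))
        = ∫⁻ u, ENNReal.ofReal (⨅ j, w u j) ∂(volume.restrict (A i ∩ Set.Ioi 0)) := by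
      intro i
      rw [hGval i, ← lintegral_const_mul _ (hmeasint i), hGrestrict i]
      refine setLIntegral_congr_fun ((hAmeas i).inter measurableSet_Ioi)
        (fun u hu => ?_)
      rw [← ENNReal.ofReal_mul (hlam i).le]
      exact congrArg ENNReal.ofReal (hwmin u i hu.1)
    have hU2 : (⋃ i, A i ∩ Set.Ioi 0) = Set.Ioi (0:ℝ) := by
      rw [← Set.iUnion_inter, hAunion, Set.univ_inter]
    have hdisj3 : Pairwise (Function.onFun Disjoint fun i => A i ∩ Set.Ioi (0:ℝ)) := fun i j hij =>
      (hAdisj hij).mono Set.inter_subset_left Set.inter_subset_left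
    have hrestr := Measure.restrict_iUnion hdisj3
      (fun i => (hAmeas i).inter measurableSet_Ioi) (μ := volume)
    rw [hU2] at hrestr
    have hvalstar : ∑ i, ENNReal.ofReal (lam i)
          * distortionRiskE P (K i) (fun ω => fstar i (X₀ ω))
        = ∫⁻ s in Set.Ioi (0:ℝ), ENNReal.ofReal (⨅ j, w s j) := by
      simp_rw [hstep1]
      rw [show ∫⁻ s in Set.Ioi (0:ℝ), ENNReal.ofReal (⨅ j, w s j)
          = ∫⁻ s, ENNReal.ofReal (⨅ j, w s j) ∂(volume.restrict (Set.Ioi 0)) from rfl,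
        hrestr, lintegral_sum_measure, tsum_fintype]
    exact le_of_le_of_eq (iInf₂_le fstar hfstar_adm) hvalstar
  · -- lower bound
    refine le_iInf fun f => le_iInf fun hf => ?_
    obtain ⟨G, hGspec, hGsum, hGval⟩ := value_eq K hcont hmeas hpos hf
    have hstep : ∀ i, ∫⁻ u, ENNReal.ofReal (⨅ j, w u j)
          ∂((G i).measure.restrict (Set.Ioi 0))
        ≤ ENNReal.ofReal (lam i) * distortionRiskE P (K i) (fun ω => f i (X₀ ω)) := by
      intro i
      have hpt : ∀ u : ℝ, ENNReal.ofReal (⨅ j, w u j)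
          ≤ ENNReal.ofReal (lam i)
            * ENNReal.ofReal (1 - (K i).toStieltjes (cdf P X₀ u)) := by
        intro u
        rw [← ENNReal.ofReal_mul (hlam i).le]
        exact ENNReal.ofReal_le_ofReal (ciInf_le (hbddw u) i)
      calc ∫⁻ u, ENNReal.ofReal (⨅ j, w u j) ∂((G i).measure.restrict (Set.Ioi 0))
          ≤ ∫⁻ u, ENNReal.ofReal (lam i)
              * ENNReal.ofReal (1 - (K i).toStieltjes (cdf P X₀ u))
              ∂((G i).measure.restrict (Set.Ioi 0)) := lintegral_mono hpt
        _ = ENNReal.ofReal (lam i)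
              * ∫⁻ u, ENNReal.ofReal (1 - (K i).toStieltjes (cdf P X₀ u))
              ∂((G i).measure.restrict (Set.Ioi 0)) := lintegral_const_mul _ (hmeasint i)
        _ = ENNReal.ofReal (lam i)
              * distortionRiskE P (K i) (fun ω => f i (X₀ ω)) := by rw [hGval i]
    calc ∫⁻ s in Set.Ioi (0:ℝ), ENNReal.ofReal (⨅ j, w s j)
        = ∫⁻ u, ENNReal.ofReal (⨅ j, w u j)
            ∂(∑ i, (G i).measure.restrict (Set.Ioi 0)) := by rw [hGsum]
      _ = ∑ i, ∫⁻ u, ENNReal.ofReal (⨅ j, w u j)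
            ∂((G i).measure.restrict (Set.Ioi 0)) :=
          lintegral_finset_sum_measure _ _ _
      _ ≤ ∑ i, ENNReal.ofReal (lam i)
            * distortionRiskE P (K i) (fun ω => f i (X₀ ω)) :=
          Finset.sum_le_sum fun i _ => hstep i

end
end

section
/- Let Φ₁, …, Φₙ be distortion kernels with associated distortion risk measures ρ₁, …, ρₙ, each satisfying lim_{m→∞} ρᵢ(X ∧ m) = ρᵢ(X) for every nonnegative random variable X with ρᵢ(X) well defined, and let X₀ be a random variable with X₀ ≥ 0 a.s. and F_{X₀}(0) = 0. Then the co-monotone positive infimal convolution of ρ₁, …, ρₙ at X₀ equals the distortion risk measure with kernel Φ = max{Φ₁, …, Φₙ}: inf{Σᵢ ρᵢ(fᵢ(X₀)) : (f₁, …, fₙ) ∈ 𝔸ℂ} = ρ_Φ(X₀), where Φ(t) = max{Φ₁(t), …, Φₙ(t)}. -/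
open MeasureTheory Filter
open Set Topology
open scoped ENNReal Pointwise Classical

noncomputable section

variable {Ω : Type*} [MeasurableSpace Ω]


namespace Stmt19Aux

/-- The defining set of `VaR`. -/
def VaRset (P : Measure Ω) (X : Ω → ℝ) (t : ℝ) : Set ℝ :=
  {x : ℝ | P {ω | x < X ω} ≤ ENNReal.ofReal (1 - t)}

lemma VaR_eq (P : Measure Ω) (X : Ω → ℝ) (t : ℝ) : VaR P X t = sInf (VaRset P X t) := rfl

lemma DK_mono (K : DistortionKernel) : Monotone K.toStieltjes := K.toStieltjes.mono

lemma DK_one (K : DistortionKernel) : K.toStieltjes 1 = 1 := K.one_of_one_le 1 le_rfl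

lemma DK_zero (K : DistortionKernel) : K.toStieltjes 0 = 0 := K.zero_of_nonpos 0 le_rfl

lemma DK_nonneg (K : DistortionKernel) (x : ℝ) : 0 ≤ K.toStieltjes x := by
  rcases le_total x 0 with h | h
  · rw [K.zero_of_nonpos x h]
  · rw [← DK_zero K]; exact DK_mono K h

lemma DK_le_one (K : DistortionKernel) (x : ℝ) : K.toStieltjes x ≤ 1 := by
  rcases le_total x 1 with h | h
  · rw [← DK_one K]; exact DK_mono K h
  · rw [K.one_of_one_le x h]

lemma DK_leftLim_le_one (K : DistortionKernel) : Function.leftLim K.toStieltjes 1 ≤ 1 := by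
  have := (DK_mono K).leftLim_le (le_refl (1:ℝ))
  rwa [DK_one K] at this

lemma DK_leftLim_nonneg (K : DistortionKernel) : 0 ≤ Function.leftLim K.toStieltjes 1 := by
  have := (DK_mono K).le_leftLim (show (0:ℝ) < 1 by norm_num)
  rwa [DK_zero K] at this

lemma DK_leftLim_mono {K K' : DistortionKernel}
    (h : ∀ x, K.toStieltjes x ≤ K'.toStieltjes x) :
    Function.leftLim K.toStieltjes 1 ≤ Function.leftLim K'.toStieltjes 1 := by
  haveI : (𝓝[<] (1:ℝ)).NeBot := nhdsLT_neBot 1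
  exact le_of_tendsto_of_tendsto ((DK_mono K).tendsto_leftLim 1)
    ((DK_mono K').tendsto_leftLim 1) (Eventually.of_forall fun x => h x)

variable (P : Measure Ω) [IsProbabilityMeasure P]

lemma cdf_nonneg (X : Ω → ℝ) (x : ℝ) : 0 ≤ cdf P X x := ENNReal.toReal_nonneg

lemma cdf_le_one (X : Ω → ℝ) (x : ℝ) : cdf P X x ≤ 1 := by
  rw [cdf]
  exact ENNReal.toReal_le_of_le_ofReal zero_le_one (by simpa using prob_le_one)

lemma cdf_mono (X : Ω → ℝ) : Monotone (cdf P X) := fun a b hab =>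
  ENNReal.toReal_mono (measure_ne_top P _)
    (measure_mono fun ω (hω : X ω ≤ a) => le_trans hω hab)

lemma measurable_cdf (X : Ω → ℝ) : Measurable (cdf P X) := (cdf_mono P X).measurable

lemma gt_le_iff_cdf {X : Ω → ℝ} (hX : Measurable X) {t : ℝ} (ht1 : t ≤ 1) (s : ℝ) :
    P {ω | s < X ω} ≤ ENNReal.ofReal (1 - t) ↔ t ≤ cdf P X s := by
  have hmeas : MeasurableSet {ω | X ω ≤ s} := hX measurableSet_Iic
  have hc : {ω | s < X ω} = {ω | X ω ≤ s}ᶜ := by ext ω; simp [not_le]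
  rw [hc, prob_compl_eq_one_sub hmeas, tsub_le_iff_right, cdf,
    ← ENNReal.ofReal_le_iff_le_toReal (measure_ne_top P _)]
  constructor
  · intro h
    have h5 : ENNReal.ofReal t = 1 - ENNReal.ofReal (1 - t) := by
      rw [show (1:ℝ≥0∞) = ENNReal.ofReal 1 by simp, ← ENNReal.ofReal_sub _ (by linarith)]
      norm_num
    rw [h5, tsub_le_iff_right]
    rwa [add_comm] at h
  · intro h
    rcases le_or_gt 0 t with h0 | h0
    · calc (1:ℝ≥0∞) = ENNReal.ofReal (1 - t) + ENNReal.ofReal t := by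
            rw [← ENNReal.ofReal_add (by linarith) h0]; norm_num
        _ ≤ _ := by gcongr
    · have h6 : (1:ℝ≥0∞) ≤ ENNReal.ofReal (1 - t) := by
        rw [show (1:ℝ≥0∞) = ENNReal.ofReal 1 by simp]
        exact ENNReal.ofReal_le_ofReal (by linarith)
      exact le_trans h6 le_self_add

set_option linter.unusedSectionVars false

lemma VaRset_upward {P : Measure Ω} {X : Ω → ℝ} {t x y : ℝ} (hx : x ∈ VaRset P X t)
    (hxy : x ≤ y) : y ∈ VaRset P X t :=
  le_trans (measure_mono fun ω (hω : y < X ω) => lt_of_le_of_lt hxy hω) hx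

lemma VaRset_subset_Ici {X : Ω → ℝ} (hX0 : ∀ ω, 0 ≤ X ω) {t : ℝ} (ht : 0 < t) :
    VaRset P X t ⊆ Ici 0 := by
  intro x hx
  by_contra hcon
  rw [mem_Ici, not_le] at hcon
  have huniv : {ω | x < X ω} = univ := eq_univ_of_forall fun ω => lt_of_lt_of_le hcon (hX0 ω)
  have : (1 : ℝ≥0∞) ≤ ENNReal.ofReal (1 - t) := by
    have := hx
    rw [VaRset, Set.mem_setOf_eq, huniv, measure_univ] at this
    exact this
  have h2 : ENNReal.ofReal (1 - t) < 1 := ENNReal.ofReal_lt_one.mpr (by linarith)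
  exact absurd this (not_le.mpr h2)

lemma VaRset_bddBelow {X : Ω → ℝ} (hX0 : ∀ ω, 0 ≤ X ω) {t : ℝ} (ht : 0 < t) :
    BddBelow (VaRset P X t) :=
  ⟨0, fun _ hy => VaRset_subset_Ici P hX0 ht hy⟩

lemma VaRset_nonempty_of_lt_one {X : Ω → ℝ} (hX : Measurable X) {t : ℝ} (ht1 : t < 1) :
    (VaRset P X t).Nonempty := by
  have h0 : 0 < ENNReal.ofReal (1 - t) := ENNReal.ofReal_pos.2 (by linarith)
  have htend : Tendsto (fun m : ℕ => P {ω | (m : ℝ) < X ω}) atTop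
      (𝓝 (P (⋂ m : ℕ, {ω | (m : ℝ) < X ω}))) := by
    have := tendsto_measure_iInter_atTop (μ := P) (s := fun m : ℕ => {ω | (m : ℝ) < X ω})
      (fun m => (hX measurableSet_Ioi).nullMeasurableSet)
      (fun a b hab => fun ω (hω : (b:ℝ) < X ω) =>
        lt_of_le_of_lt (by exact_mod_cast hab) hω)
      ⟨0, measure_ne_top P _⟩
    exact this
  have hempty : (⋂ m : ℕ, {ω | (m : ℝ) < X ω}) = ∅ := by
    ext ω
    simp only [mem_iInter, mem_setOf_eq, mem_empty_iff_false, iff_false, not_forall, not_lt]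
    obtain ⟨m, hm⟩ := exists_nat_gt (X ω)
    exact ⟨m, hm.le⟩
  rw [hempty, measure_empty] at htend
  have := htend.eventually_lt_const h0
  obtain ⟨m, hm⟩ := this.exists
  exact ⟨(m : ℝ), hm.le⟩

lemma VaRset_nonempty_of_bdd {X : Ω → ℝ} {t : ℝ}
    (hbdd : ∃ c : ℝ, P {ω | c < X ω} = 0) : (VaRset P X t).Nonempty := by
  obtain ⟨c, hc⟩ := hbdd
  exact ⟨c, by simp [VaRset, hc]⟩

lemma VaR_mem {X : Ω → ℝ} (hX : Measurable X) {t : ℝ}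
    (hne : (VaRset P X t).Nonempty) : VaR P X t ∈ VaRset P X t := by
  set a := VaR P X t with ha
  have hcup : {ω | a < X ω} = ⋃ n : ℕ, {ω | a + 1 / (n + 1) < X ω} := by
    ext ω
    simp only [mem_setOf_eq, mem_iUnion]
    constructor
    · intro h
      obtain ⟨n, hn⟩ := exists_nat_one_div_lt (show (0:ℝ) < X ω - a by linarith)
      exact ⟨n, by linarith⟩
    · rintro ⟨n, hn⟩
      have : (0:ℝ) < 1 / (n + 1) := by positivity
      linarith
  have hmono : Monotone (fun n : ℕ => {ω | a + 1 / (n + 1) < X ω}) := by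
    intro n m hnm ω (hω : a + 1 / (n + 1) < X ω)
    have h1 : (1:ℝ) / (m + 1) ≤ 1 / (n + 1) := by
      apply one_div_le_one_div_of_le (by positivity)
      exact_mod_cast add_le_add_left (Nat.cast_le.mpr hnm) 1
    exact lt_of_le_of_lt (by linarith) hω
  have hmem : ∀ n : ℕ, a + 1 / (n + 1) ∈ VaRset P X t := by
    intro n
    have hlt : a < a + 1 / (n + 1) := by
      have : (0:ℝ) < 1 / (n + 1) := by positivity
      linarith
    obtain ⟨y, hy, hy2⟩ := exists_lt_of_csInf_lt hne hlt
    exact VaRset_upward hy hy2.le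
  show P {ω | a < X ω} ≤ _
  rw [hcup, hmono.measure_iUnion]
  exact iSup_le fun n => hmem n

lemma VaR_nonneg {X : Ω → ℝ} (hX0 : ∀ ω, 0 ≤ X ω) {t : ℝ} (ht : 0 < t) :
    0 ≤ VaR P X t :=
  Real.sInf_nonneg fun _ hx => VaRset_subset_Ici P hX0 ht hx

lemma VaR_le_iff {X : Ω → ℝ} (hX : Measurable X) (hX0 : ∀ ω, 0 ≤ X ω) {t : ℝ} (ht : 0 < t)
    (hne : (VaRset P X t).Nonempty) (s : ℝ) :
    VaR P X t ≤ s ↔ P {ω | s < X ω} ≤ ENNReal.ofReal (1 - t) := by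
  constructor
  · intro h
    exact VaRset_upward (VaR_mem P hX hne) h
  · intro h
    exact csInf_le (VaRset_bddBelow P hX0 ht) h

lemma VaR_le_iff_cdf {X : Ω → ℝ} (hX : Measurable X) (hX0 : ∀ ω, 0 ≤ X ω) {t : ℝ}
    (ht : 0 < t) (ht1 : t ≤ 1) (hne : (VaRset P X t).Nonempty) (s : ℝ) :
    VaR P X t ≤ s ↔ t ≤ cdf P X s :=
  (VaR_le_iff P hX hX0 ht hne s).trans (gt_le_iff_cdf P hX ht1 s)

lemma VaR_monotoneOn_Ioo {X : Ω → ℝ} (hX : Measurable X) (hX0 : ∀ ω, 0 ≤ X ω) :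
    MonotoneOn (VaR P X) (Ioo (0:ℝ) 1) := by
  intro t ht t' ht' htt'
  apply csInf_le_csInf (VaRset_bddBelow P hX0 ht.1) (VaRset_nonempty_of_lt_one P hX ht'.2)
  intro y hy
  exact le_trans hy (ENNReal.ofReal_le_ofReal (by linarith))

lemma VaR_monotoneOn_Ioc {X : Ω → ℝ} (hX : Measurable X) (hX0 : ∀ ω, 0 ≤ X ω)
    (hbdd : ∃ c : ℝ, P {ω | c < X ω} = 0) :
    MonotoneOn (VaR P X) (Ioc (0:ℝ) 1) := by
  intro t ht t' ht' htt'
  apply csInf_le_csInf (VaRset_bddBelow P hX0 ht.1) (VaRset_nonempty_of_bdd P hbdd)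
  intro y hy
  exact le_trans hy (ENNReal.ofReal_le_ofReal (by linarith))

lemma Ioc_inter_Ioi' {q : ℝ} (hq : 0 ≤ q) : Ioc (0:ℝ) 1 ∩ Ioi q = Ioc q 1 := by
  ext x
  simp only [mem_inter_iff, mem_Ioc, mem_Ioi]
  constructor
  · rintro ⟨⟨_, h2⟩, h3⟩; exact ⟨h3, h2⟩
  · rintro ⟨h1, h2⟩; exact ⟨⟨lt_of_le_of_lt hq h1, h2⟩, h1⟩

lemma Ioo_inter_Ioi' {q : ℝ} (hq : 0 ≤ q) : Ioo (0:ℝ) 1 ∩ Ioi q = Ioo q 1 := by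
  ext x
  simp only [mem_inter_iff, mem_Ioo, mem_Ioi]
  constructor
  · rintro ⟨⟨_, h2⟩, h3⟩; exact ⟨h3, h2⟩
  · rintro ⟨h1, h2⟩; exact ⟨⟨lt_of_le_of_lt hq h1, h2⟩, h1⟩

lemma K_measure_Ioc (K : DistortionKernel) (q : ℝ) :
    K.toStieltjes.measure (Ioc q 1) = ENNReal.ofReal (1 - K.toStieltjes q) := by
  rw [StieltjesFunction.measure_Ioc, DK_one]

lemma K_measure_Ioo (K : DistortionKernel) (q : ℝ) :
    K.toStieltjes.measure (Ioo q 1)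
      = ENNReal.ofReal (Function.leftLim K.toStieltjes 1 - K.toStieltjes q) := by
  rw [StieltjesFunction.measure_Ioo]

lemma K_measure_singleton (K : DistortionKernel) :
    K.toStieltjes.measure {1}
      = ENNReal.ofReal (1 - Function.leftLim K.toStieltjes 1) := by
  rw [StieltjesFunction.measure_singleton, DK_one]

lemma tonelli_master (K : DistortionKernel) {T : Set ℝ} (hT : MeasurableSet T)
    (hTsub : T ⊆ Icc 0 1) {X : Ω → ℝ}
    (hG : ∀ t ∈ T, ∀ s : ℝ, VaR P X t ≤ s ↔ t ≤ cdf P X s)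
    {B : Set ℝ} (hB : MeasurableSet B) (hB0 : B ⊆ Ioi 0) :
    ∫⁻ t in T, volume (B ∩ Iio (VaR P X t)) ∂K.toStieltjes.measure
      = ∫⁻ s in Ioi 0,
          B.indicator (fun s => K.toStieltjes.measure (T ∩ Ioi (cdf P X s))) s ∂volume := by
  set μ := K.toStieltjes.measure with hμ
  haveI : IsFiniteMeasure (μ.restrict T) := by
    constructor
    rw [Measure.restrict_apply_univ]
    calc μ T ≤ μ (Icc 0 1) := measure_mono hTsub
      _ < ⊤ := by rw [hμ, StieltjesFunction.measure_Icc]; exact ENNReal.ofReal_lt_top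
  set E : Set (ℝ × ℝ) := {p | p.2 ∈ B ∧ cdf P X p.2 < p.1} with hE
  have hEm : MeasurableSet E := by
    have h1 : MeasurableSet {p : ℝ × ℝ | p.2 ∈ B} := hB.preimage measurable_snd
    have h2 : MeasurableSet {p : ℝ × ℝ | cdf P X p.2 < p.1} :=
      measurableSet_lt ((measurable_cdf P X).comp measurable_snd) measurable_fst
    exact h1.inter h2
  have hunc : AEMeasurable (Function.uncurry fun t s => E.indicator (1 : ℝ × ℝ → ℝ≥0∞) (t, s))
      ((μ.restrict T).prod (volume.restrict (Ioi 0))) := by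
    have : Function.uncurry (fun t s => E.indicator (1 : ℝ × ℝ → ℝ≥0∞) (t, s))
        = E.indicator 1 := by
      funext p; rfl
    rw [this]
    exact (measurable_one.indicator hEm).aemeasurable
  have swap := lintegral_lintegral_swap hunc
  calc ∫⁻ t in T, volume (B ∩ Iio (VaR P X t)) ∂μ
      = ∫⁻ t in T, ∫⁻ s in Ioi 0, E.indicator (1 : ℝ × ℝ → ℝ≥0∞) (t, s) ∂volume ∂μ := by
        apply setLIntegral_congr_fun hT
        intro t ht
        have hfun : (fun s => E.indicator (1 : ℝ × ℝ → ℝ≥0∞) (t, s))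
            = (B ∩ {s | cdf P X s < t}).indicator 1 := by
          funext s
          by_cases hs : s ∈ B ∩ {s | cdf P X s < t}
          · rw [indicator_of_mem hs]
            have : (t, s) ∈ E := ⟨hs.1, hs.2⟩
            rw [indicator_of_mem this]; rfl
          · rw [indicator_of_notMem hs]
            have : (t, s) ∉ E := fun hc => hs ⟨hc.1, hc.2⟩
            rw [indicator_of_notMem this]
        have hSm : MeasurableSet (B ∩ {s | cdf P X s < t}) :=
          hB.inter (measurableSet_lt (measurable_cdf P X) measurable_const)
        dsimp only
        rw [hfun, lintegral_indicator_one hSm, Measure.restrict_apply hSm]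
        have hset : B ∩ {s | cdf P X s < t} ∩ Ioi 0 = B ∩ Iio (VaR P X t) := by
          have h1 : B ∩ {s | cdf P X s < t} ∩ Ioi 0 = B ∩ {s | cdf P X s < t} := by
            rw [inter_eq_left.mpr]
            exact fun s hs => hB0 hs.1
          rw [h1]
          ext s
          simp only [mem_inter_iff, mem_setOf_eq, mem_Iio]
          constructor
          · rintro ⟨h1, h2⟩
            refine ⟨h1, ?_⟩
            rw [← not_le]
            intro hc
            exact absurd ((hG t ht s).mp hc) (not_le.mpr h2)
          · rintro ⟨h1, h2⟩
            refine ⟨h1, ?_⟩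
            rw [← not_le]
            intro hc
            exact absurd ((hG t ht s).mpr hc) (not_le.mpr h2)
        rw [hset]
    _ = ∫⁻ s in Ioi 0, ∫⁻ t in T, E.indicator (1 : ℝ × ℝ → ℝ≥0∞) (t, s) ∂μ ∂volume := swap
    _ = ∫⁻ s in Ioi 0,
          B.indicator (fun s => μ (T ∩ Ioi (cdf P X s))) s ∂volume := by
        apply setLIntegral_congr_fun measurableSet_Ioi
        intro s _
        dsimp only
        by_cases hsB : s ∈ B
        · have hfun : (fun t => E.indicator (1 : ℝ × ℝ → ℝ≥0∞) (t, s))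
              = (Ioi (cdf P X s)).indicator 1 := by
            funext t
            by_cases ht : t ∈ Ioi (cdf P X s)
            · rw [indicator_of_mem ht, indicator_of_mem (show (t, s) ∈ E from ⟨hsB, ht⟩)]; rfl
            · rw [indicator_of_notMem ht,
                indicator_of_notMem (show (t, s) ∉ E from fun hc => ht hc.2)]
          rw [hfun, lintegral_indicator_one measurableSet_Ioi,
            Measure.restrict_apply measurableSet_Ioi, indicator_of_mem hsB, inter_comm]
        · have hfun : (fun t => E.indicator (1 : ℝ × ℝ → ℝ≥0∞) (t, s))
              = fun _ => 0 := by
            funext t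
            rw [indicator_of_notMem (show (t, s) ∉ E from fun hc => hsB hc.1)]
          rw [hfun, lintegral_const, zero_mul, indicator_of_notMem hsB]

lemma rep_general (K : DistortionKernel) {T : Set ℝ} (hT : MeasurableSet T)
    (hTsub : T ⊆ Icc 0 1) {X : Ω → ℝ} (hVpos : ∀ t ∈ T, 0 ≤ VaR P X t)
    (hG : ∀ t ∈ T, ∀ s : ℝ, VaR P X t ≤ s ↔ t ≤ cdf P X s) :
    ∫⁻ t in T, ENNReal.ofReal (VaR P X t) ∂K.toStieltjes.measure
      = ∫⁻ s in Ioi 0, K.toStieltjes.measure (T ∩ Ioi (cdf P X s)) ∂volume := by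
  have hmaster := tonelli_master P K hT hTsub hG measurableSet_Ioi (subset_refl (Ioi 0))
  calc ∫⁻ t in T, ENNReal.ofReal (VaR P X t) ∂K.toStieltjes.measure
      = ∫⁻ t in T, volume (Ioi 0 ∩ Iio (VaR P X t)) ∂K.toStieltjes.measure := by
        apply setLIntegral_congr_fun hT (fun t ht => ?_)
        rw [Ioi_inter_Iio, Real.volume_Ioo, sub_zero]
    _ = ∫⁻ s in Ioi 0,
          (Ioi (0:ℝ)).indicator (fun s => K.toStieltjes.measure (T ∩ Ioi (cdf P X s))) s
            ∂volume := hmaster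
    _ = ∫⁻ s in Ioi 0, K.toStieltjes.measure (T ∩ Ioi (cdf P X s)) ∂volume := by
        apply setLIntegral_congr_fun measurableSet_Ioi (fun s hs => ?_)
        rw [indicator_of_mem hs]

lemma rep_Ioc (K : DistortionKernel) {X : Ω → ℝ} (hX : Measurable X)
    (hX0 : ∀ ω, 0 ≤ X ω) (hbdd : ∃ c : ℝ, P {ω | c < X ω} = 0) :
    distortionRiskE P K X
      = ∫⁻ s in Ioi 0, ENNReal.ofReal (1 - K.toStieltjes (cdf P X s)) ∂volume := by
  rw [distortionRiskE, rep_general P K measurableSet_Ioc Ioc_subset_Icc_self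
    (fun t ht => VaR_nonneg P hX0 ht.1)
    (fun t ht s => VaR_le_iff_cdf P hX hX0 ht.1 ht.2 (VaRset_nonempty_of_bdd P hbdd) s)]
  apply lintegral_congr fun s => ?_
  rw [Ioc_inter_Ioi' (cdf_nonneg P X s), K_measure_Ioc]

lemma rep_Ioo (K : DistortionKernel) {X : Ω → ℝ} (hX : Measurable X)
    (hX0 : ∀ ω, 0 ≤ X ω) :
    ∫⁻ t in Ioo (0:ℝ) 1, ENNReal.ofReal (VaR P X t) ∂K.toStieltjes.measure
      = ∫⁻ s in Ioi 0,
          ENNReal.ofReal (Function.leftLim K.toStieltjes 1 - K.toStieltjes (cdf P X s))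
            ∂volume := by
  rw [rep_general P K measurableSet_Ioo Ioo_subset_Icc_self
    (fun t ht => VaR_nonneg P hX0 ht.1)
    (fun t ht s => VaR_le_iff_cdf P hX hX0 ht.1 ht.2.le
      (VaRset_nonempty_of_lt_one P hX ht.2) s)]
  apply lintegral_congr fun s => ?_
  rw [Ioo_inter_Ioi' (cdf_nonneg P X s), K_measure_Ioo]

lemma rep_indicator_Ioc (K : DistortionKernel) {X : Ω → ℝ} (hX : Measurable X)
    (hX0 : ∀ ω, 0 ≤ X ω) (hbdd : ∃ c : ℝ, P {ω | c < X ω} = 0)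
    {B : Set ℝ} (hB : MeasurableSet B) (hB0 : B ⊆ Ioi 0) :
    ∫⁻ t in Ioc (0:ℝ) 1, volume (B ∩ Iio (VaR P X t)) ∂K.toStieltjes.measure
      = ∫⁻ s in Ioi 0,
          B.indicator (fun s => ENNReal.ofReal (1 - K.toStieltjes (cdf P X s))) s ∂volume := by
  rw [tonelli_master P K measurableSet_Ioc Ioc_subset_Icc_self
    (fun t ht s => VaR_le_iff_cdf P hX hX0 ht.1 ht.2 (VaRset_nonempty_of_bdd P hbdd) s) hB hB0]
  apply lintegral_congr fun s => ?_
  by_cases hs : s ∈ B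
  · rw [indicator_of_mem hs, indicator_of_mem hs, Ioc_inter_Ioi' (cdf_nonneg P X s),
      K_measure_Ioc]
  · rw [indicator_of_notMem hs, indicator_of_notMem hs]

lemma rep_indicator_Ioo (K : DistortionKernel) {X : Ω → ℝ} (hX : Measurable X)
    (hX0 : ∀ ω, 0 ≤ X ω) {B : Set ℝ} (hB : MeasurableSet B) (hB0 : B ⊆ Ioi 0) :
    ∫⁻ t in Ioo (0:ℝ) 1, volume (B ∩ Iio (VaR P X t)) ∂K.toStieltjes.measure
      = ∫⁻ s in Ioi 0,
          B.indicator (fun s =>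
            ENNReal.ofReal (Function.leftLim K.toStieltjes 1 - K.toStieltjes (cdf P X s))) s
              ∂volume := by
  rw [tonelli_master P K measurableSet_Ioo Ioo_subset_Icc_self
    (fun t ht s => VaR_le_iff_cdf P hX hX0 ht.1 ht.2.le
      (VaRset_nonempty_of_lt_one P hX ht.2) s) hB hB0]
  apply lintegral_congr fun s => ?_
  by_cases hs : s ∈ B
  · rw [indicator_of_mem hs, indicator_of_mem hs, Ioo_inter_Ioi' (cdf_nonneg P X s),
      K_measure_Ioo]
  · rw [indicator_of_notMem hs, indicator_of_notMem hs]

lemma lintegral_Ioc_split (K : DistortionKernel) (g : ℝ → ℝ≥0∞) :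
    ∫⁻ t in Ioc (0:ℝ) 1, g t ∂K.toStieltjes.measure
      = (∫⁻ t in Ioo (0:ℝ) 1, g t ∂K.toStieltjes.measure)
          + g 1 * K.toStieltjes.measure {1} := by
  have hsplit : Ioc (0:ℝ) 1 = Ioo 0 1 ∪ {1} := by
    ext x
    simp only [mem_Ioc, mem_Ioo, union_singleton, mem_insert_iff]
    constructor
    · rintro ⟨h1, h2⟩
      rcases h2.lt_or_eq with h | h
      · exact Or.inr ⟨h1, h⟩
      · exact Or.inl h
    · rintro (rfl | ⟨h1, h2⟩)
      · exact ⟨one_pos, le_rfl⟩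
      · exact ⟨h1, h2.le⟩
  rw [hsplit, lintegral_union (measurableSet_singleton 1)
    (disjoint_singleton_right.mpr (by simp)), lintegral_singleton]

section Comp

variable {g : ℝ → ℝ} (hg : Monotone g) (hg0 : ∀ x ≤ 0, g x = 0) (hgc : Continuous g)

include hg hg0 in
lemma g_nonneg (x : ℝ) : 0 ≤ g x := by
  rcases le_total x 0 with h | h
  · rw [hg0 x h]
  · rw [← hg0 0 le_rfl]; exact hg h

include hg hg0 hgc in
lemma comp_set_eq {s : ℝ} (hs : 0 ≤ s) (hU : {x : ℝ | s < g x}.Nonempty) :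
    ∀ x : ℝ, s < g x ↔ sInf {x : ℝ | s < g x} < x := by
  set U := {x : ℝ | s < g x} with hUdef
  have hUpos : U ⊆ Ioi 0 := by
    intro x hx
    by_contra hc
    rw [mem_Ioi, not_lt] at hc
    have := hg0 x hc
    have hxU : s < g x := hx
    rw [this] at hxU
    linarith
  have hbdd : BddBelow U := ⟨0, fun y hy => (hUpos hy).le⟩
  intro x
  constructor
  · intro hx
    rcases (csInf_le hbdd hx).lt_or_eq with h | h
    · exact h
    · exfalso
      have hopen : IsOpen U := isOpen_Ioi.preimage hgc
      have hx' : sInf U ∈ U := by rw [h]; exact hx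
      obtain ⟨ε, hε, hball⟩ := Metric.isOpen_iff.mp hopen _ hx'
      have hmem : sInf U - ε / 2 ∈ U := hball (by
        simp only [Metric.mem_ball, Real.dist_eq]
        rw [abs_of_nonpos (by linarith)]
        linarith)
      have := csInf_le hbdd hmem
      linarith
  · intro hx
    obtain ⟨y, hy, hyx⟩ := exists_lt_of_csInf_lt hU hx
    exact lt_of_lt_of_le hy (hg hyx.le)

include hg hg0 hgc in
lemma VaR_comp {X : Ω → ℝ} (hX : Measurable X) (hX0 : ∀ ω, 0 ≤ X ω) {t : ℝ}
    (ht : 0 < t) (ht1 : t ≤ 1) (hneX : (VaRset P X t).Nonempty)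
    (hneY : (VaRset P (fun ω => g (X ω)) t).Nonempty) :
    VaR P (fun ω => g (X ω)) t = g (VaR P X t) := by
  have hY : Measurable fun ω => g (X ω) := hgc.measurable.comp hX
  have hY0 : ∀ ω, 0 ≤ g (X ω) := fun ω => g_nonneg hg hg0 (X ω)
  have key : ∀ s : ℝ, 0 ≤ s →
      (VaR P (fun ω => g (X ω)) t ≤ s ↔ g (VaR P X t) ≤ s) := by
    intro s hs
    by_cases hU : {x : ℝ | s < g x}.Nonempty
    · have hiff := comp_set_eq hg hg0 hgc hs hU
      set u := sInf {x : ℝ | s < g x} with hu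
      have hsetY : {ω | s < g (X ω)} = {ω | u < X ω} := by
        ext ω; exact hiff (X ω)
      rw [VaR_le_iff P hY hY0 ht hneY s, hsetY, ← VaR_le_iff P hX hX0 ht hneX u]
      constructor
      · intro h
        by_contra hc
        rw [not_le] at hc
        exact absurd ((hiff _).mp hc) (not_lt.mpr h)
      · intro h
        by_contra hc
        rw [not_le] at hc
        exact absurd ((hiff _).mpr hc) (not_lt.mpr h)
    · rw [Set.not_nonempty_iff_eq_empty] at hU
      have hall : ∀ x, g x ≤ s := by
        intro x
        by_contra hc
        rw [not_le] at hc
        exact eq_empty_iff_forall_notMem.mp hU x hc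
      apply iff_of_true _ (hall _)
      rw [VaR_le_iff P hY hY0 ht hneY s]
      have : {ω | s < g (X ω)} = ∅ :=
        eq_empty_of_forall_notMem fun ω h => absurd h (not_lt.mpr (hall (X ω)))
      rw [this, measure_empty]
      exact zero_le'
  have ha : 0 ≤ VaR P (fun ω => g (X ω)) t := VaR_nonneg P hY0 ht
  have hb : 0 ≤ g (VaR P X t) := g_nonneg hg hg0 _
  exact le_antisymm ((key _ hb).mpr le_rfl) ((key _ ha).mp le_rfl)

end Comp

lemma VaR_one_of_unbdd {X : Ω → ℝ} (hUB : ∀ c : ℝ, P {ω | c < X ω} ≠ 0) :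
    VaR P X 1 = 0 := by
  have : VaRset P X 1 = ∅ := by
    rw [eq_empty_iff_forall_notMem]
    intro x hx
    rw [VaRset, mem_setOf_eq, sub_self, ENNReal.ofReal_zero, le_zero_iff] at hx
    exact hUB x hx
  rw [VaR_eq, this, Real.sInf_empty]

lemma VaR_one_min_of_unbdd {X : Ω → ℝ} (hUB : ∀ c : ℝ, P {ω | c < X ω} ≠ 0)
    {m : ℝ} (hm : 0 ≤ m) : VaR P (fun ω => min (X ω) m) 1 = m := by
  have hmem : m ∈ VaRset P (fun ω => min (X ω) m) 1 := by
    rw [VaRset, mem_setOf_eq]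
    have : {ω | m < min (X ω) m} = ∅ :=
      eq_empty_of_forall_notMem fun ω (h : m < min (X ω) m) =>
        absurd h (not_lt.mpr (min_le_right _ _))
    rw [this, measure_empty]
    exact zero_le'
  have hlb : ∀ y ∈ VaRset P (fun ω => min (X ω) m) 1, m ≤ y := by
    intro y hy
    by_contra hc
    rw [not_le] at hc
    have hset : {ω | y < min (X ω) m} = {ω | y < X ω} := by
      ext ω
      simp only [mem_setOf_eq, lt_min_iff]
      exact ⟨fun h => h.1, fun h => ⟨h, hc⟩⟩
    rw [VaRset, mem_setOf_eq, sub_self, ENNReal.ofReal_zero, le_zero_iff, hset] at hy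
    exact hUB y hy
  exact le_antisymm (csInf_le ⟨m, hlb⟩ hmem) (le_csInf ⟨m, hmem⟩ hlb)

lemma dichotomy (K : DistortionKernel) (hc : ContinuityCondition P K)
    (hK1 : Function.leftLim K.toStieltjes 1 < 1)
    {Y : Ω → ℝ} (hY : Measurable Y) (hY0 : ∀ ω, 0 ≤ Y ω)
    (hUB : ∀ c : ℝ, P {ω | c < Y ω} ≠ 0) :
    distortionRiskE P K Y = ⊤ := by
  set a := K.toStieltjes.measure {1} with ha
  have hapos : 0 < a := by
    rw [ha, K_measure_singleton]; exact ENNReal.ofReal_pos.2 (by linarith)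
  have hane : a ≠ ⊤ := by rw [ha, K_measure_singleton]; exact ENNReal.ofReal_ne_top
  have hlow : ∀ m : ℕ,
      ENNReal.ofReal m * a ≤ distortionRiskE P K (fun ω => min (Y ω) m) := by
    intro m
    have h1 : ∫⁻ t in {(1:ℝ)}, ENNReal.ofReal (VaR P (fun ω => min (Y ω) m) t)
        ∂K.toStieltjes.measure ≤ distortionRiskE P K (fun ω => min (Y ω) m) := by
      apply lintegral_mono_set
      intro x hx
      rw [mem_singleton_iff] at hx
      subst hx; exact ⟨one_pos, le_rfl⟩
    rwa [lintegral_singleton, VaR_one_min_of_unbdd P hUB (Nat.cast_nonneg m)] at h1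
  have hlim := hc Y hY hY0
  by_contra hne
  have hbound : ∀ m₀ : ℕ, ENNReal.ofReal m₀ * a ≤ distortionRiskE P K Y := by
    intro m₀
    apply ge_of_tendsto hlim
    filter_upwards [eventually_ge_atTop m₀] with m hm
    exact le_trans (mul_le_mul_left (ENNReal.ofReal_le_ofReal (by exact_mod_cast hm)) a)
      (hlow m)
  set L := distortionRiskE P K Y with hL
  have hdivne : L / a ≠ ⊤ := by
    rw [Ne, ENNReal.div_eq_top]
    push_neg
    exact ⟨fun _ => (ne_of_gt hapos), fun hc' => absurd hc' hne⟩
  have hfin : ∀ m₀ : ℕ, (m₀ : ℝ) ≤ (L / a).toReal := by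
    intro m₀
    have := (ENNReal.le_div_iff_mul_le (Or.inl (ne_of_gt hapos)) (Or.inl hane)).mpr
      (hbound m₀)
    exact (ENNReal.ofReal_le_iff_le_toReal hdivne).mp this
  obtain ⟨m₀, hm₀⟩ := exists_nat_gt ((L / a).toReal)
  exact absurd (hfin m₀) (not_le.mpr hm₀)

section Fstar

variable {n : ℕ} (A : Fin n → Set ℝ)

/-- The candidate optimal allocation functions. -/
def fstar (i : Fin n) (x : ℝ) : ℝ := (volume (A i ∩ Ioo 0 x)).toReal

lemma fstar_vol_ne_top (i : Fin n) (x : ℝ) : volume (A i ∩ Ioo 0 x) ≠ ⊤ := by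
  apply LT.lt.ne
  calc volume (A i ∩ Ioo 0 x) ≤ volume (Ioo 0 x) := measure_mono inter_subset_right
    _ < ⊤ := by rw [Real.volume_Ioo]; exact ENNReal.ofReal_lt_top

lemma fstar_ofReal (i : Fin n) (x : ℝ) :
    ENNReal.ofReal (fstar A i x) = volume (A i ∩ Ioo 0 x) :=
  ENNReal.ofReal_toReal (fstar_vol_ne_top A i x)

lemma fstar_nonneg (i : Fin n) (x : ℝ) : 0 ≤ fstar A i x := ENNReal.toReal_nonneg

lemma fstar_mono (i : Fin n) : Monotone (fstar A i) := by
  intro x y hxy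
  apply ENNReal.toReal_mono (fstar_vol_ne_top A i y)
  exact measure_mono (inter_subset_inter_right _ (Ioo_subset_Ioo le_rfl hxy))

lemma fstar_nonpos (i : Fin n) {x : ℝ} (hx : x ≤ 0) : fstar A i x = 0 := by
  rw [fstar, Ioo_eq_empty (by intro h; linarith), inter_empty, measure_empty]
  simp

lemma fstar_lip_aux (i : Fin n) {x y : ℝ} (hxy : x ≤ y) :
    fstar A i y ≤ fstar A i x + (y - x) := by
  have hsub : A i ∩ Ioo 0 y ⊆ (A i ∩ Ioo 0 x) ∪ Ico x y := by
    rintro s ⟨hs1, hs2, hs3⟩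
    rcases lt_or_ge s x with h | h
    · exact Or.inl ⟨hs1, hs2, h⟩
    · exact Or.inr ⟨h, hs3⟩
  have hle : volume (A i ∩ Ioo 0 y) ≤ volume (A i ∩ Ioo 0 x) + ENNReal.ofReal (y - x) := by
    refine le_trans (measure_mono hsub) (le_trans (measure_union_le _ _) ?_)
    rw [Real.volume_Ico]
  calc fstar A i y ≤ (volume (A i ∩ Ioo 0 x) + ENNReal.ofReal (y - x)).toReal :=
        ENNReal.toReal_mono (by
          exact ENNReal.add_ne_top.mpr ⟨fstar_vol_ne_top A i x, ENNReal.ofReal_ne_top⟩) hle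
    _ = fstar A i x + (y - x) := by
        rw [ENNReal.toReal_add (fstar_vol_ne_top A i x) ENNReal.ofReal_ne_top, fstar,
          ENNReal.toReal_ofReal (by linarith)]

lemma fstar_cont (i : Fin n) : Continuous (fstar A i) := by
  apply LipschitzWith.continuous (K := 1)
  apply LipschitzWith.of_dist_le_mul
  intro x y
  simp only [NNReal.coe_one, one_mul]
  rw [Real.dist_eq, Real.dist_eq, abs_le]
  rcases le_total x y with h | h
  · have h1 := fstar_lip_aux A i h
    have h2 := fstar_mono A i h
    rw [abs_of_nonpos (by linarith)]
    constructor <;> linarith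
  · have h1 := fstar_lip_aux A i h
    have h2 := fstar_mono A i h
    rw [abs_of_nonneg (by linarith)]
    constructor <;> linarith

lemma fstar_sum (hAm : ∀ i, MeasurableSet (A i))
    (hdisj : Pairwise (Function.onFun Disjoint A)) (hcover : ⋃ i, A i = Ioi 0)
    {x : ℝ} (hx : 0 ≤ x) : ∑ i, fstar A i x = x := by
  have hU : ⋃ i, A i ∩ Ioo 0 x = Ioo 0 x := by
    rw [← iUnion_inter, hcover]
    exact inter_eq_right.mpr (fun s hs => hs.1)
  have hvol : ∑ i, volume (A i ∩ Ioo 0 x) = volume (Ioo 0 x) := by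
    have h2 := measure_iUnion (μ := volume) (f := fun i => A i ∩ Ioo 0 x)
      (fun i j hij => (hdisj hij).mono inter_subset_left inter_subset_left)
      (fun i => (hAm i).inter measurableSet_Ioo)
    rw [hU, tsum_fintype] at h2
    exact h2.symm
  calc ∑ i, fstar A i x = (∑ i, volume (A i ∩ Ioo 0 x)).toReal :=
        (ENNReal.toReal_sum (fun i _ => fstar_vol_ne_top A i x)).symm
    _ = x := by rw [hvol, Real.volume_Ioo, sub_zero, ENNReal.toReal_ofReal hx]

lemma fstar_exists_gt (i : Fin n) (hA0 : A i ⊆ Ioi 0) {c : ℝ≥0∞} (hc : c < volume (A i)) :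
    ∃ x : ℝ, c < volume (A i ∩ Ioo 0 x) := by
  have hcov : (⋃ k : ℕ, A i ∩ Ioo 0 k) = A i ∩ Ioi 0 := by
    rw [← inter_iUnion]
    congr 1
    ext s
    simp only [mem_iUnion, mem_Ioo, mem_Ioi]
    constructor
    · rintro ⟨k, h1, _⟩; exact h1
    · intro h
      obtain ⟨k, hk⟩ := exists_nat_gt s
      exact ⟨k, h, hk⟩
  have hvol : volume (A i) = ⨆ k : ℕ, volume (A i ∩ Ioo 0 k) := by
    rw [← Monotone.measure_iUnion (fun a b hab =>
      inter_subset_inter_right _ (Ioo_subset_Ioo le_rfl (by exact_mod_cast hab))), hcov,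
      inter_eq_left.mpr hA0]
  rw [hvol] at hc
  obtain ⟨k, hk⟩ := lt_iSup_iff.mp hc
  exact ⟨k, hk⟩

end Fstar

section Aset

variable {n : ℕ} (K : Fin n → DistortionKernel) (Kmax : DistortionKernel) (F : ℝ → ℝ)

/-- Least-index attainment sets for the pointwise maximum of the kernels. -/
def Aset (i : Fin n) : Set ℝ :=
  {s | 0 < s ∧ (K i).toStieltjes (F s) = Kmax.toStieltjes (F s) ∧
       ∀ j, j < i → (K j).toStieltjes (F s) ≠ Kmax.toStieltjes (F s)}

lemma Aset_subset (i : Fin n) : Aset K Kmax F i ⊆ Ioi 0 := fun _ hs => hs.1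

lemma Aset_eq_on (i : Fin n) {s : ℝ} (hs : s ∈ Aset K Kmax F i) :
    (K i).toStieltjes (F s) = Kmax.toStieltjes (F s) := hs.2.1

lemma Aset_measurable (hF : Measurable F) (i : Fin n) :
    MeasurableSet (Aset K Kmax F i) := by
  have hfun : ∀ j : Fin n, Measurable fun s => (K j).toStieltjes (F s) := fun j =>
    ((DK_mono (K j)).measurable).comp hF
  have hfunm : Measurable fun s => Kmax.toStieltjes (F s) :=
    ((DK_mono Kmax).measurable).comp hF
  have hA : Aset K Kmax F i = Ioi 0 ∩
      ({s | (K i).toStieltjes (F s) = Kmax.toStieltjes (F s)} ∩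
        ⋂ (j : Fin n) (_ : j < i),
          {s | (K j).toStieltjes (F s) = Kmax.toStieltjes (F s)}ᶜ) := by
    ext s
    simp only [Aset, mem_setOf_eq, mem_inter_iff, mem_Ioi, mem_iInter, mem_compl_iff]
    try tauto
  rw [hA]
  exact measurableSet_Ioi.inter ((measurableSet_eq_fun (hfun i) hfunm).inter
    (MeasurableSet.iInter fun j => MeasurableSet.iInter fun _ =>
      (measurableSet_eq_fun (hfun j) hfunm).compl))

lemma Aset_disjoint : Pairwise (Function.onFun Disjoint (Aset K Kmax F)) := by
  intro i j hij
  apply Set.disjoint_left.mpr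
  rintro s ⟨_, hi2, hi3⟩ ⟨_, hj2, hj3⟩
  rcases lt_trichotomy i j with h | h | h
  · exact hj3 i h hi2
  · exact hij h
  · exact hi3 j h hj2

lemma Aset_cover (hn : 0 < n)
    (hex : ∀ u : ℝ, ∃ i, (K i).toStieltjes u = Kmax.toStieltjes u) :
    ⋃ i, Aset K Kmax F i = Ioi 0 := by
  apply subset_antisymm
  · exact iUnion_subset fun i => Aset_subset K Kmax F i
  · intro s hs
    haveI : Nonempty (Fin n) := ⟨⟨0, hn⟩⟩
    classical
    set S := Finset.univ.filter
      (fun i => (K i).toStieltjes (F s) = Kmax.toStieltjes (F s)) with hS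
    have hSne : S.Nonempty := by
      obtain ⟨i, hi⟩ := hex (F s)
      exact ⟨i, by simp [hS, hi]⟩
    refine mem_iUnion.mpr ⟨S.min' hSne, hs, ?_, ?_⟩
    · have := S.min'_mem hSne
      simp only [hS, Finset.mem_filter] at this
      exact this.2
    · intro j hj hc
      have hjS : j ∈ S := by simp [hS, hc]
      exact absurd (S.min'_le j hjS) (not_le.mpr hj)

end Aset

lemma cdf_lt_one_of_unbdd {X : Ω → ℝ} (hX : Measurable X)
    (hUB : ∀ c : ℝ, P {ω | c < X ω} ≠ 0) (s : ℝ) : cdf P X s < 1 := by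
  have hne : P {ω | X ω ≤ s} ≠ 1 := by
    intro hc
    apply hUB s
    have hmeas : MeasurableSet {ω | X ω ≤ s} := hX measurableSet_Iic
    have hcompl : {ω | s < X ω} = {ω | X ω ≤ s}ᶜ := by ext ω; simp [not_le]
    rw [hcompl, prob_compl_eq_one_sub hmeas, hc, tsub_self]
  have hlt : P {ω | X ω ≤ s} < 1 := lt_of_le_of_ne prob_le_one hne
  rw [cdf, show (1:ℝ) = (1:ℝ≥0∞).toReal by simp]
  exact (ENNReal.toReal_lt_toReal (measure_ne_top P _) ENNReal.one_ne_top).mpr hlt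

lemma VaR_congr {X Y : Ω → ℝ} (h : X =ᵐ[P] Y) (t : ℝ) : VaR P X t = VaR P Y t := by
  have : ∀ x : ℝ, P {ω | x < X ω} = P {ω | x < Y ω} := by
    intro x
    apply measure_congr
    filter_upwards [h] with ω hω
    change (x < X ω) = (x < Y ω)
    rw [hω]
  rw [VaR_eq, VaR_eq, VaRset, VaRset]
  congr 1
  ext x
  rw [mem_setOf_eq, mem_setOf_eq, this x]

lemma distortionRiskE_congr (K : DistortionKernel) {X Y : Ω → ℝ} (h : X =ᵐ[P] Y) :
    distortionRiskE P K X = distortionRiskE P K Y := by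
  rw [distortionRiskE, distortionRiskE]
  apply lintegral_congr fun t => ?_
  rw [VaR_congr P h]

lemma comp_bdd {g : ℝ → ℝ} (hg : Monotone g) {X : Ω → ℝ}
    (hbdd : ∃ c : ℝ, P {ω | c < X ω} = 0) : ∃ c : ℝ, P {ω | c < g (X ω)} = 0 := by
  obtain ⟨c, hc⟩ := hbdd
  exact ⟨g c, measure_mono_null
    (fun ω (hω : g c < g (X ω)) => lt_of_not_ge fun hle => absurd (hg hle) (not_le.mpr hω)) hc⟩

lemma partition_indicator_sum {n : ℕ} {A : Fin n → Set ℝ}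
    (hdisj : Pairwise (Function.onFun Disjoint A)) (hcover : ⋃ i, A i = Ioi 0)
    (g : ℝ → ℝ≥0∞) {s : ℝ} (hs : s ∈ Ioi (0:ℝ)) :
    ∑ i, (A i).indicator g s = g s := by
  rw [← hcover] at hs
  obtain ⟨i₀, hi₀⟩ := mem_iUnion.mp hs
  rw [Finset.sum_eq_single i₀]
  · rw [indicator_of_mem hi₀]
  · intro j _ hj
    exact indicator_of_notMem (fun hjs => (hdisj hj).le_bot ⟨hjs, hi₀⟩) g
  · intro h
    exact absurd (Finset.mem_univ i₀) h

lemma lintegral_indicator_const_Ioi {A : Set ℝ} (hA : MeasurableSet A)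
    (hA0 : A ⊆ Ioi 0) (c : ℝ≥0∞) :
    ∫⁻ s in Ioi 0, A.indicator (fun _ => c) s ∂volume = c * volume A := by
  rw [lintegral_indicator hA, setLIntegral_const, Measure.restrict_apply hA,
    inter_eq_left.mpr hA0]

lemma Ai_inter_Iio {A : Set ℝ} (hA0 : A ⊆ Ioi 0) (v : ℝ) :
    A ∩ Ioo 0 v = A ∩ Iio v := by
  ext s
  simp only [mem_inter_iff, mem_Ioo, mem_Iio]
  exact ⟨fun ⟨h1, _, h3⟩ => ⟨h1, h3⟩, fun ⟨h1, h2⟩ => ⟨h1, hA0 h1, h2⟩⟩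

lemma admissible_increment {n : ℕ} {f : Fin n → ℝ → ℝ} (hf : IsAdmissible n f)
    (i : Fin n) {a b : ℝ} (ha : 0 ≤ a) (hab : a ≤ b) : f i b - f i a ≤ b - a := by
  obtain ⟨hmono, hnonneg, hzero, hsum⟩ := hf
  have hb : 0 ≤ b := le_trans ha hab
  calc f i b - f i a ≤ ∑ j, (f j b - f j a) := by
        apply Finset.single_le_sum (f := fun j => f j b - f j a)
          (fun j _ => sub_nonneg.mpr (hmono j ha hb hab)) (Finset.mem_univ i)
    _ = b - a := by rw [Finset.sum_sub_distrib, hsum a ha, hsum b hb]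

lemma globalize_cont {n : ℕ} {f : Fin n → ℝ → ℝ} (hf : IsAdmissible n f) (i : Fin n) :
    Continuous (fun x => f i (max x 0)) := by
  apply LipschitzWith.continuous (K := 1)
  apply LipschitzWith.of_dist_le_mul
  intro x y
  simp only [NNReal.coe_one, one_mul]
  have hmono : Monotone (fun x => f i (max x 0)) := fun a b hab =>
    hf.1 i (Set.mem_Ici.mpr (le_max_right _ _)) (Set.mem_Ici.mpr (le_max_right _ _)) (max_le_max hab le_rfl)
  have key : ∀ a b : ℝ, a ≤ b →
      f i (max b 0) - f i (max a 0) ≤ b - a ∨ f i (max b 0) - f i (max a 0) ≤ 0 := by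
    intro a b hab
    rcases le_total b 0 with hb | hb
    · right
      rw [max_eq_right hb, max_eq_right (le_trans hab hb)]
      simp
    · left
      calc f i (max b 0) - f i (max a 0) ≤ max b 0 - max a 0 :=
            admissible_increment hf i (le_max_right _ _) (max_le_max hab le_rfl)
        _ = b - max a 0 := by rw [max_eq_left hb]
        _ ≤ b - a := by
            have := le_max_left a (0:ℝ)
            linarith
  rw [Real.dist_eq, Real.dist_eq, abs_le]
  rcases le_total x y with h | h
  · have h1 : f i (max x 0) ≤ f i (max y 0) := hmono h
    have h2 := key x y h
    rw [abs_sub_comm x y, abs_of_nonneg (by linarith : (0:ℝ) ≤ y - x)]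
    rcases h2 with h3 | h3 <;> constructor <;> linarith
  · have h1 : f i (max y 0) ≤ f i (max x 0) := hmono h
    have h2 := key y x h
    rw [abs_of_nonneg (by linarith : (0:ℝ) ≤ x - y)]
    rcases h2 with h3 | h3 <;> constructor <;> linarith

lemma toReal_lt_fstar {n : ℕ} (A : Fin n → Set ℝ) (i : Fin n) {c x : ℝ} (hc : 0 ≤ c)
    (hx : ENNReal.ofReal c < volume (A i ∩ Ioo 0 x)) : c < fstar A i x := by
  have := (ENNReal.toReal_lt_toReal ENNReal.ofReal_ne_top (fstar_vol_ne_top A i x)).mpr hx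
  rwa [ENNReal.toReal_ofReal hc] at this

lemma fstar_comp_unbdd {n : ℕ} (A : Fin n → Set ℝ) (i : Fin n) (hA0 : A i ⊆ Ioi 0)
    (htop : volume (A i) = ⊤) {X : Ω → ℝ}
    (hUB : ∀ c : ℝ, P {ω | c < X ω} ≠ 0) :
    ∀ c : ℝ, P {ω | c < fstar A i (X ω)} ≠ 0 := by
  intro c
  rcases lt_or_ge c 0 with hc | hc
  · have huniv : {ω | c < fstar A i (X ω)} = univ :=
      eq_univ_of_forall fun ω => lt_of_lt_of_le hc (fstar_nonneg A i _)
    rw [huniv, measure_univ]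
    exact one_ne_zero
  · obtain ⟨x, hx⟩ := fstar_exists_gt A i hA0
      (htop ▸ ENNReal.ofReal_lt_top : ENNReal.ofReal c < volume (A i))
    have hfx : c < fstar A i x := toReal_lt_fstar A i hc hx
    intro h0
    apply hUB x
    apply measure_mono_null _ h0
    intro ω (hω : x < X ω)
    exact lt_of_lt_of_le hfx (fstar_mono A i hω.le)

lemma VaR_one_fstar {n : ℕ} (A : Fin n → Set ℝ) (i : Fin n) (hA0 : A i ⊆ Ioi 0)
    (hfin : volume (A i) ≠ ⊤) {X : Ω → ℝ}
    (hUB : ∀ c : ℝ, P {ω | c < X ω} ≠ 0) :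
    VaR P (fun ω => fstar A i (X ω)) 1 = (volume (A i)).toReal := by
  set ℓ := (volume (A i)).toReal with hℓ
  have hmem : ℓ ∈ VaRset P (fun ω => fstar A i (X ω)) 1 := by
    rw [VaRset, mem_setOf_eq]
    have hempty : {ω | ℓ < fstar A i (X ω)} = ∅ :=
      eq_empty_of_forall_notMem fun ω h => absurd h (not_lt.mpr
        (ENNReal.toReal_mono hfin (measure_mono inter_subset_left)))
    rw [hempty, measure_empty]
    exact zero_le'
  have hlb : ∀ y ∈ VaRset P (fun ω => fstar A i (X ω)) 1, ℓ ≤ y := by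
    intro y hy
    rw [VaRset, mem_setOf_eq, sub_self, ENNReal.ofReal_zero, le_zero_iff] at hy
    by_contra hcon
    rw [not_le] at hcon
    rcases lt_or_ge y 0 with hy0 | hy0
    · have huniv : {ω | y < fstar A i (X ω)} = univ :=
        eq_univ_of_forall fun ω => lt_of_lt_of_le hy0 (fstar_nonneg A i _)
      rw [huniv, measure_univ] at hy
      exact one_ne_zero hy
    · have hoy : ENNReal.ofReal y < volume (A i) := by
        rw [← ENNReal.ofReal_toReal hfin]
        exact ENNReal.ofReal_lt_ofReal_iff_of_nonneg hy0 |>.mpr hcon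
      obtain ⟨x, hx⟩ := fstar_exists_gt A i hA0 hoy
      have hfx : y < fstar A i x := toReal_lt_fstar A i hy0 hx
      apply hUB x
      apply measure_mono_null _ hy
      intro ω (hω : x < X ω)
      exact lt_of_lt_of_le hfx (fstar_mono A i hω.le)
  exact le_antisymm (csInf_le ⟨ℓ, hlb⟩ hmem) (le_csInf ⟨ℓ, hmem⟩ hlb)

lemma fstar_body_Ioo {n : ℕ} (A : Fin n → Set ℝ) (hAm : ∀ i, MeasurableSet (A i))
    (hA0 : ∀ i, A i ⊆ Ioi 0) (i : Fin n) (K' : DistortionKernel) {X : Ω → ℝ}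
    (hX : Measurable X) (hX0 : ∀ ω, 0 ≤ X ω) :
    ∫⁻ t in Ioo (0:ℝ) 1, ENNReal.ofReal (VaR P (fun ω => fstar A i (X ω)) t)
        ∂K'.toStieltjes.measure
      = ∫⁻ s in Ioi 0, (A i).indicator
          (fun s => ENNReal.ofReal
            (Function.leftLim K'.toStieltjes 1 - K'.toStieltjes (cdf P X s))) s ∂volume := by
  have hYmeas : Measurable fun ω => fstar A i (X ω) := (fstar_cont A i).measurable.comp hX
  calc ∫⁻ t in Ioo (0:ℝ) 1, ENNReal.ofReal (VaR P (fun ω => fstar A i (X ω)) t)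
        ∂K'.toStieltjes.measure
      = ∫⁻ t in Ioo (0:ℝ) 1, volume (A i ∩ Iio (VaR P X t)) ∂K'.toStieltjes.measure := by
        apply setLIntegral_congr_fun measurableSet_Ioo (fun t ht => ?_)
        rw [VaR_comp P (fstar_mono A i) (fun x hx => fstar_nonpos A i hx) (fstar_cont A i)
          hX hX0 ht.1 ht.2.le (VaRset_nonempty_of_lt_one P hX ht.2)
          (VaRset_nonempty_of_lt_one P hYmeas ht.2),
          fstar_ofReal, Ai_inter_Iio (hA0 i)]
    _ = _ := rep_indicator_Ioo P K' hX hX0 (hAm i) (hA0 i)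

lemma fstar_body_Ioc {n : ℕ} (A : Fin n → Set ℝ) (hAm : ∀ i, MeasurableSet (A i))
    (hA0 : ∀ i, A i ⊆ Ioi 0) (i : Fin n) (K' : DistortionKernel) {X : Ω → ℝ}
    (hX : Measurable X) (hX0 : ∀ ω, 0 ≤ X ω) (hbdd : ∃ c : ℝ, P {ω | c < X ω} = 0) :
    ∫⁻ t in Ioc (0:ℝ) 1, ENNReal.ofReal (VaR P (fun ω => fstar A i (X ω)) t)
        ∂K'.toStieltjes.measure
      = ∫⁻ s in Ioi 0, (A i).indicator
          (fun s => ENNReal.ofReal (1 - K'.toStieltjes (cdf P X s))) s ∂volume := by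
  have hYmeas : Measurable fun ω => fstar A i (X ω) := (fstar_cont A i).measurable.comp hX
  have hYbdd : ∃ c : ℝ, P {ω | c < fstar A i (X ω)} = 0 := comp_bdd P (fstar_mono A i) hbdd
  calc ∫⁻ t in Ioc (0:ℝ) 1, ENNReal.ofReal (VaR P (fun ω => fstar A i (X ω)) t)
        ∂K'.toStieltjes.measure
      = ∫⁻ t in Ioc (0:ℝ) 1, volume (A i ∩ Iio (VaR P X t)) ∂K'.toStieltjes.measure := by
        apply setLIntegral_congr_fun measurableSet_Ioc (fun t ht => ?_)
        rw [VaR_comp P (fstar_mono A i) (fun x hx => fstar_nonpos A i hx) (fstar_cont A i)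
          hX hX0 ht.1 ht.2 (VaRset_nonempty_of_bdd P hbdd)
          (VaRset_nonempty_of_bdd P hYbdd),
          fstar_ofReal, Ai_inter_Iio (hA0 i)]
    _ = _ := rep_indicator_Ioc P K' hX hX0 hbdd (hAm i) (hA0 i)

lemma VaR_aemeas_Ioc (μ : Measure ℝ) {X : Ω → ℝ} (hX : Measurable X)
    (hX0 : ∀ ω, 0 ≤ X ω) (hbdd : ∃ c : ℝ, P {ω | c < X ω} = 0) :
    AEMeasurable (fun t => ENNReal.ofReal (VaR P X t)) (μ.restrict (Ioc 0 1)) :=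
  ENNReal.measurable_ofReal.comp_aemeasurable
    (aemeasurable_restrict_of_monotoneOn measurableSet_Ioc (VaR_monotoneOn_Ioc P hX hX0 hbdd))

lemma VaR_aemeas_Ioo (μ : Measure ℝ) {X : Ω → ℝ} (hX : Measurable X)
    (hX0 : ∀ ω, 0 ≤ X ω) :
    AEMeasurable (fun t => ENNReal.ofReal (VaR P X t)) (μ.restrict (Ioo 0 1)) :=
  ENNReal.measurable_ofReal.comp_aemeasurable
    (aemeasurable_restrict_of_monotoneOn measurableSet_Ioo (VaR_monotoneOn_Ioo P hX hX0))

section Main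

variable {n : ℕ} (K : Fin n → DistortionKernel) (Kmax : DistortionKernel)

lemma globalize_facts {f : Fin n → ℝ → ℝ} (hf : IsAdmissible n f) (i : Fin n) :
    Monotone (fun x => f i (max x 0)) ∧ (∀ x ≤ 0, f i (max x 0) = 0) := by
  constructor
  · exact fun a b hab => hf.1 i (Set.mem_Ici.mpr (le_max_right _ _)) (Set.mem_Ici.mpr (le_max_right _ _)) (max_le_max hab le_rfl)
  · intro x hx
    rw [max_eq_right hx]
    exact hf.2.2.1 i

lemma sum_VaR_eq {f : Fin n → ℝ → ℝ} (hf : IsAdmissible n f) {X : Ω → ℝ}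
    (hXmeas : Measurable X) (hX0 : ∀ ω, 0 ≤ X ω) {t : ℝ} (ht : 0 < t) (ht1 : t ≤ 1)
    (hneX : (VaRset P X t).Nonempty)
    (hneY : ∀ i, (VaRset P (fun ω => f i (max (X ω) 0)) t).Nonempty) :
    ENNReal.ofReal (VaR P X t)
      = ∑ i, ENNReal.ofReal (VaR P (fun ω => f i (max (X ω) 0)) t) := by
  have hv0 : 0 ≤ VaR P X t := VaR_nonneg P hX0 ht
  have hcomp : ∀ i, VaR P (fun ω => f i (max (X ω) 0)) t = f i (max (VaR P X t) 0) :=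
    fun i => VaR_comp P (globalize_facts hf i).1 (globalize_facts hf i).2
      (globalize_cont hf i) hXmeas hX0 ht ht1 hneX (hneY i)
  calc ENNReal.ofReal (VaR P X t)
      = ENNReal.ofReal (∑ i, f i (max (VaR P X t) 0)) := by
        rw [max_eq_left hv0, hf.2.2.2 _ hv0]
    _ = ∑ i, ENNReal.ofReal (f i (max (VaR P X t) 0)) :=
        ENNReal.ofReal_sum_of_nonneg fun i _ =>
          g_nonneg (globalize_facts hf i).1 (globalize_facts hf i).2 _
    _ = ∑ i, ENNReal.ofReal (VaR P (fun ω => f i (max (X ω) 0)) t) := by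
        exact Finset.sum_congr rfl fun i _ => by rw [hcomp i]

lemma caseA (hn : 0 < n)
    (hle : ∀ i t, (K i).toStieltjes t ≤ Kmax.toStieltjes t)
    (hex : ∀ u : ℝ, ∃ i, (K i).toStieltjes u = Kmax.toStieltjes u)
    {X : Ω → ℝ} (hXmeas : Measurable X) (hX0 : ∀ ω, 0 ≤ X ω)
    (hbdd : ∃ c : ℝ, P {ω | c < X ω} = 0) :
    (⨅ (f : Fin n → ℝ → ℝ) (_ : IsAdmissible n f),
        ∑ i, distortionRiskE P (K i) (fun ω => f i (X ω))) = distortionRiskE P Kmax X := by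
  classical
  set A : Fin n → Set ℝ := Aset K Kmax (cdf P X) with hAdef
  have hAm : ∀ i, MeasurableSet (A i) := Aset_measurable K Kmax _ (measurable_cdf P X)
  have hA0 : ∀ i, A i ⊆ Ioi 0 := Aset_subset K Kmax _
  have hdisj := Aset_disjoint K Kmax (cdf P X)
  have hcover := Aset_cover K Kmax (cdf P X) hn hex
  have hAdm : IsAdmissible n (fun i => fstar A i) :=
    ⟨fun i => (fstar_mono A i).monotoneOn _, fun i x _ => fstar_nonneg A i x,
      fun i => fstar_nonpos A i le_rfl, fun x hx => fstar_sum A hAm hdisj hcover hx⟩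
  have hmeasMax : Measurable fun s : ℝ =>
      ENNReal.ofReal (1 - Kmax.toStieltjes (cdf P X s)) :=
    ENNReal.measurable_ofReal.comp
      (measurable_const.sub ((DK_mono Kmax).measurable.comp (measurable_cdf P X)))
  apply le_antisymm
  · -- upper bound via fstar
    refine le_trans (iInf₂_le _ hAdm) (le_of_eq ?_)
    have hterm : ∀ i, distortionRiskE P (K i) (fun ω => fstar A i (X ω))
        = ∫⁻ s in Ioi 0,
            (A i).indicator (fun s => ENNReal.ofReal (1 - Kmax.toStieltjes (cdf P X s))) s
              ∂volume := by
      intro i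
      rw [distortionRiskE, fstar_body_Ioc P A hAm hA0 i (K i) hXmeas hX0 hbdd]
      apply lintegral_congr fun s => ?_
      by_cases hs : s ∈ A i
      · rw [indicator_of_mem hs, indicator_of_mem hs,
          Aset_eq_on K Kmax (cdf P X) i hs]
      · rw [indicator_of_notMem hs, indicator_of_notMem hs]
    calc ∑ i, distortionRiskE P (K i) (fun ω => fstar A i (X ω))
        = ∑ i, ∫⁻ s in Ioi 0,
            (A i).indicator (fun s => ENNReal.ofReal (1 - Kmax.toStieltjes (cdf P X s))) s
              ∂volume := Finset.sum_congr rfl fun i _ => hterm i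
      _ = ∫⁻ s in Ioi 0, ∑ i,
            (A i).indicator (fun s => ENNReal.ofReal (1 - Kmax.toStieltjes (cdf P X s))) s
              ∂volume := (lintegral_finset_sum' _ fun i _ =>
                (hmeasMax.indicator (hAm i)).aemeasurable).symm
      _ = ∫⁻ s in Ioi 0, ENNReal.ofReal (1 - Kmax.toStieltjes (cdf P X s)) ∂volume := by
          apply setLIntegral_congr_fun measurableSet_Ioi (fun s hs => ?_)
          exact partition_indicator_sum hdisj hcover _ hs
      _ = distortionRiskE P Kmax X := (rep_Ioc P Kmax hXmeas hX0 hbdd).symm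
  · -- lower bound
    apply le_iInf₂
    intro f hf
    have hgmono := fun i => (globalize_facts hf i).1
    have hgzero := fun i => (globalize_facts hf i).2
    have hYmeas : ∀ i, Measurable fun ω => f i (max (X ω) 0) :=
      fun i => (globalize_cont hf i).measurable.comp hXmeas
    have hY0 : ∀ i (ω : Ω), 0 ≤ f i (max (X ω) 0) :=
      fun i ω => g_nonneg (hgmono i) (hgzero i) _
    have hYbdd : ∀ i, ∃ c : ℝ, P {ω | c < f i (max (X ω) 0)} = 0 :=
      fun i => comp_bdd P (hgmono i) hbdd
    have hfX : ∀ i, (fun ω => f i (X ω)) = fun ω => f i (max (X ω) 0) :=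
      fun i => funext fun ω => by rw [max_eq_left (hX0 ω)]
    calc distortionRiskE P Kmax X
        = ∫⁻ t in Ioc (0:ℝ) 1,
            ∑ i, ENNReal.ofReal (VaR P (fun ω => f i (max (X ω) 0)) t)
              ∂Kmax.toStieltjes.measure := by
          rw [distortionRiskE]
          apply setLIntegral_congr_fun measurableSet_Ioc (fun t ht => ?_)
          exact sum_VaR_eq P hf hXmeas hX0 ht.1 ht.2
            (VaRset_nonempty_of_bdd P hbdd) (fun i => VaRset_nonempty_of_bdd P (hYbdd i))
      _ = ∑ i, ∫⁻ t in Ioc (0:ℝ) 1,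
            ENNReal.ofReal (VaR P (fun ω => f i (max (X ω) 0)) t)
              ∂Kmax.toStieltjes.measure :=
          lintegral_finset_sum' _ fun i _ =>
            VaR_aemeas_Ioc P _ (hYmeas i) (hY0 i) (hYbdd i)
      _ ≤ ∑ i, distortionRiskE P (K i) (fun ω => f i (max (X ω) 0)) := by
          apply Finset.sum_le_sum fun i _ => ?_
          have h1 : (∫⁻ t in Ioc (0:ℝ) 1,
              ENNReal.ofReal (VaR P (fun ω => f i (max (X ω) 0)) t)
                ∂Kmax.toStieltjes.measure)
              = distortionRiskE P Kmax (fun ω => f i (max (X ω) 0)) := rfl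
          rw [h1, rep_Ioc P Kmax (hYmeas i) (hY0 i) (hYbdd i),
            rep_Ioc P (K i) (hYmeas i) (hY0 i) (hYbdd i)]
          apply lintegral_mono fun s => ENNReal.ofReal_le_ofReal ?_
          have := hle i (cdf P (fun ω => f i (max (X ω) 0)) s)
          linarith
      _ = ∑ i, distortionRiskE P (K i) (fun ω => f i (X ω)) := by
          exact Finset.sum_congr rfl fun i _ => by rw [hfX i]

lemma caseB_top (i : Fin n) (hci : ContinuityCondition P (K i))
    (hle : ∀ j t, (K j).toStieltjes t ≤ Kmax.toStieltjes t)
    {X : Ω → ℝ} (hXmeas : Measurable X) (hX0 : ∀ ω, 0 ≤ X ω)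
    (hUB : ∀ c : ℝ, P {ω | c < X ω} ≠ 0)
    (hLi : Function.leftLim (K i).toStieltjes 1 < 1)
    (htop : volume (Aset K Kmax (cdf P X) i) = ⊤) :
    distortionRiskE P Kmax X = ⊤ := by
  set A := Aset K Kmax (cdf P X) with hAdef
  have hAm : ∀ j, MeasurableSet (A j) := Aset_measurable K Kmax _ (measurable_cdf P X)
  have hA0 : ∀ j, A j ⊆ Ioi 0 := Aset_subset K Kmax (cdf P X)
  have hYub := fstar_comp_unbdd P A i (hA0 i) htop hUB
  have hYmeas : Measurable fun ω => fstar A i (X ω) :=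
    (fstar_cont A i).measurable.comp hXmeas
  have hdich := dichotomy P (K i) hci hLi hYmeas (fun ω => fstar_nonneg A i _) hYub
  have hbody : ∫⁻ t in Ioo (0:ℝ) 1,
      ENNReal.ofReal (VaR P (fun ω => fstar A i (X ω)) t) ∂(K i).toStieltjes.measure
        = ⊤ := by
    rw [distortionRiskE, lintegral_Ioc_split (K i)] at hdich
    rwa [VaR_one_of_unbdd P hYub, ENNReal.ofReal_zero, zero_mul, add_zero] at hdich
  apply eq_top_iff.mpr
  calc (⊤:ℝ≥0∞) = ∫⁻ t in Ioo (0:ℝ) 1,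
      ENNReal.ofReal (VaR P (fun ω => fstar A i (X ω)) t) ∂(K i).toStieltjes.measure :=
        hbody.symm
    _ = ∫⁻ s in Ioi 0, (A i).indicator (fun s => ENNReal.ofReal
          (Function.leftLim (K i).toStieltjes 1 - (K i).toStieltjes (cdf P X s))) s
            ∂volume := fstar_body_Ioo P A hAm hA0 i (K i) hXmeas hX0
    _ ≤ ∫⁻ s in Ioi 0, ENNReal.ofReal
          (Function.leftLim Kmax.toStieltjes 1 - Kmax.toStieltjes (cdf P X s)) ∂volume := by
        apply lintegral_mono fun s => ?_
        by_cases hs : s ∈ A i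
        · rw [indicator_of_mem hs, Aset_eq_on K Kmax (cdf P X) i hs]
          refine ENNReal.ofReal_le_ofReal ?_
          have := DK_leftLim_mono (fun t => hle i t)
          linarith
        · rw [indicator_of_notMem hs]
          exact zero_le'
    _ = ∫⁻ t in Ioo (0:ℝ) 1, ENNReal.ofReal (VaR P X t) ∂Kmax.toStieltjes.measure :=
        (rep_Ioo P Kmax hXmeas hX0).symm
    _ ≤ distortionRiskE P Kmax X := lintegral_mono_set Ioo_subset_Ioc_self

lemma caseB1 (hn : 0 < n) (hcont : ∀ i, ContinuityCondition P (K i))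
    (hle : ∀ i t, (K i).toStieltjes t ≤ Kmax.toStieltjes t)
    (hex : ∀ u : ℝ, ∃ i, (K i).toStieltjes u = Kmax.toStieltjes u)
    {X : Ω → ℝ} (hXmeas : Measurable X) (hX0 : ∀ ω, 0 ≤ X ω)
    (hUB : ∀ c : ℝ, P {ω | c < X ω} ≠ 0)
    (hatom : Function.leftLim Kmax.toStieltjes 1 < 1) :
    (⨅ (f : Fin n → ℝ → ℝ) (_ : IsAdmissible n f),
        ∑ i, distortionRiskE P (K i) (fun ω => f i (X ω))) = distortionRiskE P Kmax X := by
  classical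
  have hayi : ∀ i, Function.leftLim (K i).toStieltjes 1 < 1 :=
    fun i => lt_of_le_of_lt (DK_leftLim_mono (fun t => hle i t)) hatom
  have hitop : ∃ i, volume (Aset K Kmax (cdf P X) i) = ⊤ := by
    by_contra hcon
    push_neg at hcon
    have hcov := Aset_cover K Kmax (cdf P X) hn hex
    have h1 : volume (Ioi (0:ℝ)) ≤ ∑ i, volume (Aset K Kmax (cdf P X) i) := by
      rw [← hcov]
      exact le_trans (measure_iUnion_le _) (le_of_eq (tsum_fintype _))
    rw [Real.volume_Ioi] at h1
    have h2 : ∑ i, volume (Aset K Kmax (cdf P X) i) < ⊤ :=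
      ENNReal.sum_lt_top.mpr fun i _ => lt_top_iff_ne_top.mpr (hcon i)
    exact h2.ne (top_le_iff.mp h1)
  obtain ⟨i₁, hi₁⟩ := hitop
  rw [caseB_top P K Kmax i₁ (hcont i₁) hle hXmeas hX0 hUB (hayi i₁) hi₁]
  rw [eq_top_iff]
  apply le_iInf₂
  intro f hf
  have hgmono := fun i => (globalize_facts hf i).1
  have hexj : ∃ j, ∀ c : ℝ, P {ω | c < f j (max (X ω) 0)} ≠ 0 := by
    by_contra hcon
    push_neg at hcon
    choose cc hcc using hcon
    apply hUB (∑ j, cc j)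
    apply measure_mono_null ?_ (measure_iUnion_null hcc)
    intro ω hω
    by_contra hall
    simp only [mem_iUnion, not_exists, mem_setOf_eq, not_lt] at hall
    have hXω : X ω = ∑ j, f j (max (X ω) 0) := by
      rw [max_eq_left (hX0 ω)]
      exact (hf.2.2.2 (X ω) (hX0 ω)).symm
    have hle2 : X ω ≤ ∑ j, cc j := by
      rw [hXω]
      exact Finset.sum_le_sum fun j _ => hall j
    exact absurd hω (not_lt.mpr hle2)
  obtain ⟨j, hjUB⟩ := hexj
  have hdichj := dichotomy P (K j) (hcont j) (hayi j)
    ((globalize_cont hf j).measurable.comp hXmeas)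
    (fun ω => g_nonneg (hgmono j) (globalize_facts hf j).2 _) hjUB
  calc (⊤:ℝ≥0∞) = distortionRiskE P (K j) (fun ω => f j (max (X ω) 0)) := hdichj.symm
    _ ≤ ∑ i, distortionRiskE P (K i) (fun ω => f i (max (X ω) 0)) :=
        Finset.single_le_sum (f := fun i => distortionRiskE P (K i) fun ω => f i (max (X ω) 0))
          (fun _ _ => zero_le') (Finset.mem_univ j)
    _ = ∑ i, distortionRiskE P (K i) (fun ω => f i (X ω)) :=
        Finset.sum_congr rfl fun i _ => by
          rw [show (fun ω => f i (X ω)) = fun ω => f i (max (X ω) 0) from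
            funext fun ω => by rw [max_eq_left (hX0 ω)]]

lemma caseB2_lower (hcont : ∀ i, ContinuityCondition P (K i))
    (hle : ∀ i t, (K i).toStieltjes t ≤ Kmax.toStieltjes t)
    {X : Ω → ℝ} (hXmeas : Measurable X) (hX0 : ∀ ω, 0 ≤ X ω)
    (hUB : ∀ c : ℝ, P {ω | c < X ω} ≠ 0)
    (hatom : Function.leftLim Kmax.toStieltjes 1 = 1)
    {f : Fin n → ℝ → ℝ} (hf : IsAdmissible n f) :
    distortionRiskE P Kmax X ≤ ∑ i, distortionRiskE P (K i) (fun ω => f i (X ω)) := by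
  have hgmono := fun i => (globalize_facts hf i).1
  have hgzero := fun i => (globalize_facts hf i).2
  have hYmeas : ∀ i, Measurable fun ω => f i (max (X ω) 0) :=
    fun i => (globalize_cont hf i).measurable.comp hXmeas
  have hY0 : ∀ i (ω : Ω), 0 ≤ f i (max (X ω) 0) :=
    fun i ω => g_nonneg (hgmono i) (hgzero i) _
  have hclaim : ∀ i, (∫⁻ t in Ioo (0:ℝ) 1,
      ENNReal.ofReal (VaR P (fun ω => f i (max (X ω) 0)) t) ∂Kmax.toStieltjes.measure)
        ≤ distortionRiskE P (K i) (fun ω => f i (max (X ω) 0)) := by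
    intro i
    by_cases hYub : ∀ c : ℝ, P {ω | c < f i (max (X ω) 0)} ≠ 0
    · by_cases hLi : Function.leftLim (K i).toStieltjes 1 < 1
      · rw [dichotomy P (K i) (hcont i) hLi (hYmeas i) (hY0 i) hYub]
        exact le_top
      · have hLieq : Function.leftLim (K i).toStieltjes 1 = 1 :=
          le_antisymm (DK_leftLim_le_one _) (not_lt.mp hLi)
        calc ∫⁻ t in Ioo (0:ℝ) 1,
            ENNReal.ofReal (VaR P (fun ω => f i (max (X ω) 0)) t) ∂Kmax.toStieltjes.measure
            = ∫⁻ s in Ioi 0, ENNReal.ofReal (Function.leftLim Kmax.toStieltjes 1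
                - Kmax.toStieltjes (cdf P (fun ω => f i (max (X ω) 0)) s)) ∂volume :=
              rep_Ioo P Kmax (hYmeas i) (hY0 i)
          _ ≤ ∫⁻ s in Ioi 0, ENNReal.ofReal (Function.leftLim (K i).toStieltjes 1
                - (K i).toStieltjes (cdf P (fun ω => f i (max (X ω) 0)) s)) ∂volume := by
              apply lintegral_mono fun s => ENNReal.ofReal_le_ofReal ?_
              rw [hatom, hLieq]
              have := hle i (cdf P (fun ω => f i (max (X ω) 0)) s)
              linarith
          _ = ∫⁻ t in Ioo (0:ℝ) 1,
              ENNReal.ofReal (VaR P (fun ω => f i (max (X ω) 0)) t)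
                ∂(K i).toStieltjes.measure := (rep_Ioo P (K i) (hYmeas i) (hY0 i)).symm
          _ ≤ distortionRiskE P (K i) (fun ω => f i (max (X ω) 0)) :=
              lintegral_mono_set Ioo_subset_Ioc_self
    · push_neg at hYub
      obtain ⟨ci, hci⟩ := hYub
      calc ∫⁻ t in Ioo (0:ℝ) 1,
          ENNReal.ofReal (VaR P (fun ω => f i (max (X ω) 0)) t) ∂Kmax.toStieltjes.measure
          = ∫⁻ s in Ioi 0, ENNReal.ofReal (Function.leftLim Kmax.toStieltjes 1
              - Kmax.toStieltjes (cdf P (fun ω => f i (max (X ω) 0)) s)) ∂volume :=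
            rep_Ioo P Kmax (hYmeas i) (hY0 i)
        _ ≤ ∫⁻ s in Ioi 0, ENNReal.ofReal
              (1 - (K i).toStieltjes (cdf P (fun ω => f i (max (X ω) 0)) s)) ∂volume := by
            apply lintegral_mono fun s => ENNReal.ofReal_le_ofReal ?_
            rw [hatom]
            have := hle i (cdf P (fun ω => f i (max (X ω) 0)) s)
            linarith
        _ = distortionRiskE P (K i) (fun ω => f i (max (X ω) 0)) :=
            (rep_Ioc P (K i) (hYmeas i) (hY0 i) ⟨ci, hci⟩).symm
  calc distortionRiskE P Kmax X
      = ∫⁻ t in Ioo (0:ℝ) 1, ENNReal.ofReal (VaR P X t) ∂Kmax.toStieltjes.measure := by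
        rw [distortionRiskE, lintegral_Ioc_split Kmax, K_measure_singleton Kmax, hatom,
          sub_self, ENNReal.ofReal_zero, mul_zero, add_zero]
    _ = ∫⁻ t in Ioo (0:ℝ) 1,
          ∑ i, ENNReal.ofReal (VaR P (fun ω => f i (max (X ω) 0)) t)
            ∂Kmax.toStieltjes.measure := by
        apply setLIntegral_congr_fun measurableSet_Ioo (fun t ht => ?_)
        exact sum_VaR_eq P hf hXmeas hX0 ht.1 ht.2.le
          (VaRset_nonempty_of_lt_one P hXmeas ht.2)
          (fun i => VaRset_nonempty_of_lt_one P (hYmeas i) ht.2)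
    _ = ∑ i, ∫⁻ t in Ioo (0:ℝ) 1,
          ENNReal.ofReal (VaR P (fun ω => f i (max (X ω) 0)) t)
            ∂Kmax.toStieltjes.measure :=
        lintegral_finset_sum' _ fun i _ => VaR_aemeas_Ioo P _ (hYmeas i) (hY0 i)
    _ ≤ ∑ i, distortionRiskE P (K i) (fun ω => f i (max (X ω) 0)) :=
        Finset.sum_le_sum fun i _ => hclaim i
    _ = ∑ i, distortionRiskE P (K i) (fun ω => f i (X ω)) :=
        Finset.sum_congr rfl fun i _ => by
          rw [show (fun ω => f i (X ω)) = fun ω => f i (max (X ω) 0) from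
            funext fun ω => by rw [max_eq_left (hX0 ω)]]

lemma caseB2_upper (hn : 0 < n) (hcont : ∀ i, ContinuityCondition P (K i))
    (hle : ∀ i t, (K i).toStieltjes t ≤ Kmax.toStieltjes t)
    (hex : ∀ u : ℝ, ∃ i, (K i).toStieltjes u = Kmax.toStieltjes u)
    {X : Ω → ℝ} (hXmeas : Measurable X) (hX0 : ∀ ω, 0 ≤ X ω)
    (hUB : ∀ c : ℝ, P {ω | c < X ω} ≠ 0)
    (hatom : Function.leftLim Kmax.toStieltjes 1 = 1) :
    (⨅ (f : Fin n → ℝ → ℝ) (_ : IsAdmissible n f),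
        ∑ i, distortionRiskE P (K i) (fun ω => f i (X ω)))
      ≤ distortionRiskE P Kmax X := by
  classical
  by_cases hRtop : distortionRiskE P Kmax X = ⊤
  · rw [hRtop]; exact le_top
  set A : Fin n → Set ℝ := Aset K Kmax (cdf P X) with hAdef
  have hAm : ∀ i, MeasurableSet (A i) := Aset_measurable K Kmax _ (measurable_cdf P X)
  have hA0 : ∀ i, A i ⊆ Ioi 0 := Aset_subset K Kmax _
  have hdisj := Aset_disjoint K Kmax (cdf P X)
  have hcover := Aset_cover K Kmax (cdf P X) hn hex
  have hAdm : IsAdmissible n (fun i => fstar A i) :=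
    ⟨fun i => (fstar_mono A i).monotoneOn _, fun i x _ => fstar_nonneg A i x,
      fun i => fstar_nonpos A i le_rfl, fun x hx => fstar_sum A hAm hdisj hcover hx⟩
  have hmeasMax : Measurable fun s : ℝ =>
      ENNReal.ofReal (1 - Kmax.toStieltjes (cdf P X s)) :=
    ENNReal.measurable_ofReal.comp
      (measurable_const.sub ((DK_mono Kmax).measurable.comp (measurable_cdf P X)))
  refine le_trans (iInf₂_le _ hAdm) (le_of_eq ?_)
  have hterm : ∀ i, distortionRiskE P (K i) (fun ω => fstar A i (X ω))
      = ∫⁻ s in Ioi 0,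
          (A i).indicator (fun s => ENNReal.ofReal (1 - Kmax.toStieltjes (cdf P X s))) s
            ∂volume := by
    intro i
    by_cases hfin : volume (A i) = ⊤
    · have hLieq : Function.leftLim (K i).toStieltjes 1 = 1 := by
        by_contra hcon
        exact hRtop (caseB_top P K Kmax i (hcont i) hle hXmeas hX0 hUB
          (lt_of_le_of_ne (DK_leftLim_le_one _) hcon) hfin)
      have hYub := fstar_comp_unbdd P A i (hA0 i) hfin hUB
      rw [distortionRiskE, lintegral_Ioc_split (K i), VaR_one_of_unbdd P hYub,
        ENNReal.ofReal_zero, zero_mul, add_zero, fstar_body_Ioo P A hAm hA0 i (K i) hXmeas hX0]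
      apply lintegral_congr fun s => ?_
      by_cases hs : s ∈ A i
      · rw [indicator_of_mem hs, indicator_of_mem hs, hLieq,
          Aset_eq_on K Kmax (cdf P X) i hs]
      · rw [indicator_of_notMem hs, indicator_of_notMem hs]
    · have hV1 := VaR_one_fstar P A i (hA0 i) hfin hUB
      have hmeas1 : Measurable fun s : ℝ => (A i).indicator (fun s =>
          ENNReal.ofReal (Function.leftLim (K i).toStieltjes 1
            - (K i).toStieltjes (cdf P X s))) s :=
        (ENNReal.measurable_ofReal.comp (measurable_const.sub
          ((DK_mono (K i)).measurable.comp (measurable_cdf P X)))).indicator (hAm i)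
      rw [distortionRiskE, lintegral_Ioc_split (K i), hV1,
        fstar_body_Ioo P A hAm hA0 i (K i) hXmeas hX0, K_measure_singleton (K i)]
      have hconst : ENNReal.ofReal ((volume (A i)).toReal)
          * ENNReal.ofReal (1 - Function.leftLim (K i).toStieltjes 1)
          = ∫⁻ s in Ioi 0, (A i).indicator (fun _ =>
              ENNReal.ofReal (1 - Function.leftLim (K i).toStieltjes 1)) s ∂volume := by
        rw [lintegral_indicator_const_Ioi (hAm i) (hA0 i), ENNReal.ofReal_toReal hfin,
          mul_comm]
      rw [hconst, ← lintegral_add_left hmeas1]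
      apply lintegral_congr fun s => ?_
      by_cases hs : s ∈ A i
      · rw [indicator_of_mem hs, indicator_of_mem hs, indicator_of_mem hs]
        have hcdf1 : cdf P X s < 1 := cdf_lt_one_of_unbdd P hXmeas hUB s
        have h1 : (K i).toStieltjes (cdf P X s) ≤ Function.leftLim (K i).toStieltjes 1 :=
          (DK_mono (K i)).le_leftLim hcdf1
        have h2 := DK_leftLim_le_one (K i)
        rw [← ENNReal.ofReal_add (by linarith) (by linarith),
          ← Aset_eq_on K Kmax (cdf P X) i hs]
        congr 1
        ring
      · rw [indicator_of_notMem hs, indicator_of_notMem hs, indicator_of_notMem hs,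
          add_zero]
  have hRHSrep : distortionRiskE P Kmax X
      = ∫⁻ s in Ioi 0, ENNReal.ofReal (1 - Kmax.toStieltjes (cdf P X s)) ∂volume := by
    rw [distortionRiskE, lintegral_Ioc_split Kmax, K_measure_singleton Kmax, hatom,
      sub_self, ENNReal.ofReal_zero, mul_zero, add_zero, rep_Ioo P Kmax hXmeas hX0, hatom]
  calc ∑ i, distortionRiskE P (K i) (fun ω => fstar A i (X ω))
      = ∑ i, ∫⁻ s in Ioi 0,
          (A i).indicator (fun s => ENNReal.ofReal (1 - Kmax.toStieltjes (cdf P X s))) s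
            ∂volume := Finset.sum_congr rfl fun i _ => hterm i
    _ = ∫⁻ s in Ioi 0, ∑ i,
          (A i).indicator (fun s => ENNReal.ofReal (1 - Kmax.toStieltjes (cdf P X s))) s
            ∂volume := (lintegral_finset_sum' _ fun i _ =>
              (hmeasMax.indicator (hAm i)).aemeasurable).symm
    _ = ∫⁻ s in Ioi 0, ENNReal.ofReal (1 - Kmax.toStieltjes (cdf P X s)) ∂volume := by
        apply setLIntegral_congr_fun measurableSet_Ioi (fun s hs => ?_)
        exact partition_indicator_sum hdisj hcover _ hs
    _ = distortionRiskE P Kmax X := hRHSrep.symm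

end Main

end Stmt19Aux

open Stmt19Aux in
theorem stmt19 (P : Measure Ω) [IsProbabilityMeasure P]
    (n : ℕ) (hn : 0 < n) (K : Fin n → DistortionKernel)
    (hcont : ∀ i, ContinuityCondition P (K i))
    (X₀ : Ω → ℝ) (hmeas : Measurable X₀) (hpos : ∀ᵐ ω ∂P, 0 ≤ X₀ ω)
    (hF0 : cdf P X₀ 0 = 0)
    (Kmax : DistortionKernel)
    (hKmax : ∀ t : ℝ, Kmax.toStieltjes t = ⨆ i, (K i).toStieltjes t) :
    ⨅ (f : Fin n → ℝ → ℝ) (_ : IsAdmissible n f),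
        ∑ i, distortionRiskE P (K i) (fun ω => f i (X₀ ω)) =
      distortionRiskE P Kmax X₀ := by
  classical
  haveI : Nonempty (Fin n) := ⟨⟨0, hn⟩⟩
  set X : Ω → ℝ := fun ω => max (X₀ ω) 0 with hXdef
  have hXmeas : Measurable X := hmeas.max measurable_const
  have hX0 : ∀ ω, 0 ≤ X ω := fun ω => le_max_right _ _
  have haeX : X₀ =ᵐ[P] X := by
    filter_upwards [hpos] with ω hω
    rw [hXdef]
    exact (max_eq_left hω).symm
  have hbddK : ∀ t : ℝ, BddAbove (range fun i => (K i).toStieltjes t) := fun t =>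
    ⟨1, by rintro y ⟨i, rfl⟩; exact DK_le_one (K i) t⟩
  have hle : ∀ i (t : ℝ), (K i).toStieltjes t ≤ Kmax.toStieltjes t := fun i t => by
    rw [hKmax t]; exact le_ciSup (hbddK t) i
  have hex : ∀ u : ℝ, ∃ i, (K i).toStieltjes u = Kmax.toStieltjes u := fun u => by
    obtain ⟨i₀, hi₀⟩ := Finite.exists_max (fun i => (K i).toStieltjes u)
    exact ⟨i₀, le_antisymm (hle i₀ u) (by rw [hKmax u]; exact ciSup_le hi₀)⟩
  have hRHS0 : distortionRiskE P Kmax X₀ = distortionRiskE P Kmax X :=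
    distortionRiskE_congr P Kmax haeX
  have hiInf : (⨅ (f : Fin n → ℝ → ℝ) (_ : IsAdmissible n f),
        ∑ i, distortionRiskE P (K i) fun ω => f i (X₀ ω))
      = ⨅ (f : Fin n → ℝ → ℝ) (_ : IsAdmissible n f),
          ∑ i, distortionRiskE P (K i) fun ω => f i (X ω) :=
    iInf_congr fun f => iInf_congr fun _ => Finset.sum_congr rfl fun i _ =>
      distortionRiskE_congr P (K i) (by filter_upwards [haeX] with ω hω; rw [hω])
  rw [hRHS0, hiInf]
  by_cases hUB : ∀ c : ℝ, P {ω | c < X ω} ≠ 0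
  · rcases lt_or_eq_of_le (DK_leftLim_le_one Kmax) with hatom | hatom
    · exact caseB1 P K Kmax hn hcont hle hex hXmeas hX0 hUB hatom
    · exact le_antisymm (caseB2_upper P K Kmax hn hcont hle hex hXmeas hX0 hUB hatom)
        (le_iInf₂ fun f hf => caseB2_lower P K Kmax hcont hle hXmeas hX0 hUB hatom hf)
  · push_neg at hUB
    obtain ⟨c₀, hc₀⟩ := hUB
    exact caseA P K Kmax hn hle hex hXmeas hX0 ⟨c₀, hc₀⟩


end
end
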